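/- arXiv:1210.4489 — 4 statements merged into one kernel-verified Lean document; each statement's English description precedes it below -/
import Mathlib

section
/- Let p > 3 be a prime and λ ∈ ℤ_p a p-adic unit. Define a_n = Σ_{i=0}^n C(2i,i)³ (λ/64)^i and b_n = Σ_{i=0}^n C(2i,i)³ (λ/64)^i ( 6(H_{2i} − H_i) + ((λ/64)^{p−1} − 1)/p ), both elements of ℚ_p. Then for every integer k with (p−1)/2 ≤ k < p and every natural number n, a_{k+pn} ≡ a_k·a_n + p·b_k·Σ_{i=0}^n i·C(2i,i)³ (λ/64)^i (mod p² ℤ_p). -/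
open Finset

/-- The harmonic sum `H_k = ∑_{j=1}^k 1/j`. -/
def harmonicSum (k : ℕ) : ℚ := ∑ j ∈ Icc 1 k, (1 : ℚ) / j

namespace St7

variable {p : ℕ} [hp : Fact p.Prime]

/-- congruence mod p^2 in ℚ_[p] -/
def Cong (p : ℕ) [Fact p.Prime] (x y : ℚ_[p]) : Prop := ‖x - y‖ ≤ (p : ℝ) ^ (-2 : ℤ)

lemma Ppos : (0:ℝ) < (p:ℝ) := by exact_mod_cast hp.out.pos
lemma Pone : (1:ℝ) < (p:ℝ) := by exact_mod_cast hp.out.one_lt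
lemma P2nonneg : (0:ℝ) ≤ (p:ℝ) ^ (-2 : ℤ) := le_of_lt (zpow_pos Ppos _)
lemma Pinv_le_one : ((p:ℝ))⁻¹ ≤ 1 := by
  rw [inv_le_one_iff₀]; right; exact le_of_lt Pone
lemma P2_eq : (p:ℝ) ^ (-2 : ℤ) = (p:ℝ)⁻¹ * (p:ℝ)⁻¹ := by
  rw [show (-2 : ℤ) = (-1) + (-1) by norm_num, zpow_add₀ (ne_of_gt Ppos)]
  simp
lemma P3_le_P2 : (p:ℝ) ^ (-3 : ℤ) ≤ (p:ℝ) ^ (-2 : ℤ) :=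
  zpow_le_zpow_right₀ (le_of_lt Pone) (by norm_num)
lemma P2_le_Pinv : (p:ℝ) ^ (-2 : ℤ) ≤ (p:ℝ)⁻¹ := by
  rw [show ((p:ℝ))⁻¹ = (p:ℝ) ^ (-1 : ℤ) by simp]
  exact zpow_le_zpow_right₀ (le_of_lt Pone) (by norm_num)
lemma Pinv_nonneg : (0:ℝ) ≤ (p:ℝ)⁻¹ := inv_nonneg.mpr (le_of_lt Ppos)

lemma cong_refl (x : ℚ_[p]) : Cong p x x := by
  unfold Cong; simpa using P2nonneg

lemma cong_of_eq {x y : ℚ_[p]} (h : x = y) : Cong p x y := h ▸ cong_refl x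

lemma cong_symm {x y : ℚ_[p]} (h : Cong p x y) : Cong p y x := by
  unfold Cong at *; rwa [← norm_neg, neg_sub]

lemma cong_trans {x y z : ℚ_[p]} (h1 : Cong p x y) (h2 : Cong p y z) : Cong p x z := by
  unfold Cong at *
  calc ‖x - z‖ = ‖(x - y) + (y - z)‖ := by ring_nf
    _ ≤ max ‖x - y‖ ‖y - z‖ := Padic.nonarchimedean _ _
    _ ≤ _ := max_le h1 h2

lemma cong_add {x y x' y' : ℚ_[p]} (h : Cong p x y) (h' : Cong p x' y') :
    Cong p (x + x') (y + y') := by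
  unfold Cong at *
  calc ‖x + x' - (y + y')‖ = ‖(x - y) + (x' - y')‖ := by ring_nf
    _ ≤ max ‖x - y‖ ‖x' - y'‖ := Padic.nonarchimedean _ _
    _ ≤ _ := max_le h h'

lemma cong_mul {x y x' y' : ℚ_[p]} (hx' : ‖x'‖ ≤ 1) (hy : ‖y‖ ≤ 1)
    (h : Cong p x y) (h' : Cong p x' y') : Cong p (x * x') (y * y') := by
  unfold Cong at *
  calc ‖x * x' - y * y'‖ = ‖(x - y) * x' + y * (x' - y')‖ := by ring_nf
    _ ≤ max ‖(x - y) * x'‖ ‖y * (x' - y')‖ := Padic.nonarchimedean _ _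
    _ ≤ _ := by
        apply max_le
        · rw [norm_mul]
          calc ‖x - y‖ * ‖x'‖ ≤ ‖x - y‖ * 1 :=
              mul_le_mul_of_nonneg_left hx' (norm_nonneg _)
            _ ≤ _ := by rwa [mul_one]
        · rw [norm_mul]
          calc ‖y‖ * ‖x' - y'‖ ≤ 1 * ‖x' - y'‖ :=
              mul_le_mul_of_nonneg_right hy (norm_nonneg _)
            _ ≤ _ := by rwa [one_mul]

lemma cong_of_norms {x y : ℚ_[p]} (hx : ‖x‖ ≤ (p:ℝ) ^ (-2:ℤ)) (hy : ‖y‖ ≤ (p:ℝ) ^ (-2:ℤ)) :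
    Cong p x y := by
  unfold Cong
  calc ‖x - y‖ ≤ max ‖x‖ ‖-y‖ := by
        rw [sub_eq_add_neg]; exact Padic.nonarchimedean _ _
    _ ≤ _ := by rw [norm_neg]; exact max_le hx hy

lemma cong_unit_cancel {x y u : ℚ_[p]} (hu : ‖u‖ = 1) (h : Cong p (x * u) (y * u)) :
    Cong p x y := by
  unfold Cong at *
  calc ‖x - y‖ = ‖x - y‖ * ‖u‖ := by rw [hu, mul_one]
    _ = ‖(x * u) - (y * u)‖ := by rw [← norm_mul]; ring_nf
    _ ≤ _ := h

lemma norm_sum_le_of {α : Type*} (s : Finset α) (f : α → ℚ_[p]) {C : ℝ} (hC : 0 ≤ C)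
    (h : ∀ i ∈ s, ‖f i‖ ≤ C) : ‖∑ i ∈ s, f i‖ ≤ C := by
  classical
  induction s using Finset.cons_induction with
  | empty => simpa using hC
  | cons a s ha ih =>
    rw [Finset.sum_cons]
    refine le_trans (Padic.nonarchimedean _ _) (max_le ?_ ?_)
    · exact h a (Finset.mem_cons_self a s)
    · exact ih fun i hi => h i (Finset.mem_cons_of_mem hi)

lemma cong_sum {α : Type*} (s : Finset α) (f g : α → ℚ_[p])
    (h : ∀ i ∈ s, Cong p (f i) (g i)) : Cong p (∑ i ∈ s, f i) (∑ i ∈ s, g i) := by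
  unfold Cong
  rw [← Finset.sum_sub_distrib]
  exact norm_sum_le_of _ _ P2nonneg h

lemma norm_prod_le_one {α : Type*} (s : Finset α) (f : α → ℚ_[p])
    (h : ∀ i ∈ s, ‖f i‖ ≤ 1) : ‖∏ i ∈ s, f i‖ ≤ 1 := by
  rw [norm_prod]
  exact Finset.prod_le_one (fun i _ => norm_nonneg _) h

lemma cong_prod {α : Type*} (s : Finset α) (f g : α → ℚ_[p])
    (hf : ∀ i ∈ s, ‖f i‖ ≤ 1) (hg : ∀ i ∈ s, ‖g i‖ ≤ 1)
    (h : ∀ i ∈ s, Cong p (f i) (g i)) : Cong p (∏ i ∈ s, f i) (∏ i ∈ s, g i) := by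
  classical
  induction s using Finset.cons_induction with
  | empty => exact cong_refl _
  | cons a s ha ih =>
    simp only [Finset.prod_cons]
    refine cong_mul (norm_prod_le_one _ _ fun i hi => hf i (Finset.mem_cons_of_mem hi))
      (hg a (Finset.mem_cons_self a s))
      (h a (Finset.mem_cons_self a s))
      (ih (fun i hi => hf i (Finset.mem_cons_of_mem hi))
        (fun i hi => hg i (Finset.mem_cons_of_mem hi))
        (fun i hi => h i (Finset.mem_cons_of_mem hi)))

lemma nrm_pow_le_one {y : ℚ_[p]} (hy : ‖y‖ ≤ 1) (m : ℕ) : ‖y ^ m‖ ≤ 1 := by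
  rw [norm_pow]; exact pow_le_one₀ (norm_nonneg _) hy

lemma cong_pow {x y : ℚ_[p]} (hx : ‖x‖ ≤ 1) (hy : ‖y‖ ≤ 1) (h : Cong p x y) (m : ℕ) :
    Cong p (x ^ m) (y ^ m) := by
  induction m with
  | zero => simpa using cong_refl (p := p) 1
  | succ m ih =>
    rw [pow_succ, pow_succ]
    exact cong_mul hx (nrm_pow_le_one hy m) ih h

-- norm facts
lemma nrm_nat (n : ℕ) : ‖(n : ℚ_[p])‖ ≤ 1 := by
  have := Padic.norm_int_le_one (p := p) (n : ℤ)
  simpa using this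

lemma nrm_nat_unit {n : ℕ} (h : ¬ p ∣ n) : ‖(n : ℚ_[p])‖ = 1 := by
  refine le_antisymm (nrm_nat n) ?_
  by_contra hlt
  push_neg at hlt
  have : ‖((n : ℤ) : ℚ_[p])‖ < 1 := by simpa using hlt
  rw [Padic.norm_intCast_lt_one_iff] at this
  exact h (by exact_mod_cast this)

lemma nrm_nat_mul_p (i : ℕ) : ‖((p * i : ℕ) : ℚ_[p])‖ ≤ (p:ℝ)⁻¹ := by
  push_cast
  rw [norm_mul, Padic.norm_p]
  calc (p:ℝ)⁻¹ * ‖(i : ℚ_[p])‖ ≤ (p:ℝ)⁻¹ * 1 :=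
      mul_le_mul_of_nonneg_left (nrm_nat i) Pinv_nonneg
    _ = _ := mul_one _

-- harmonic sums in ℚ_[p]
noncomputable def Hs (p : ℕ) [Fact p.Prime] (r : ℕ) : ℚ_[p] := ∑ s ∈ Icc 1 r, ((s : ℚ_[p]))⁻¹

lemma Hs_cast (r : ℕ) : ((harmonicSum r : ℚ) : ℚ_[p]) = Hs p r := by
  unfold harmonicSum Hs
  push_cast
  refine Finset.sum_congr rfl fun s hs => ?_
  rw [one_div]

lemma Hs_succ (r : ℕ) : Hs p (r + 1) = Hs p r + ((r + 1 : ℕ) : ℚ_[p])⁻¹ := by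
  unfold Hs
  rw [Finset.sum_Icc_succ_top (Nat.le_add_left 1 r)]

lemma nrm_inv_nat_unit {s : ℕ} (h : ¬ p ∣ s) : ‖((s : ℚ_[p]))⁻¹‖ = 1 := by
  rw [norm_inv, nrm_nat_unit h, inv_one]

lemma nrm_Hs_le_one {r : ℕ} (hr : r < p) : ‖Hs p r‖ ≤ 1 := by
  refine norm_sum_le_of _ _ zero_le_one fun s hs => ?_
  simp only [Finset.mem_Icc] at hs
  have : ¬ p ∣ s := Nat.not_dvd_of_pos_of_lt (by omega) (by omega)
  rw [nrm_inv_nat_unit this]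

lemma nrm_Hs_le_p {r : ℕ} (hr : r ≤ 2 * p - 2) : ‖Hs p r‖ ≤ (p:ℝ) := by
  refine norm_sum_le_of _ _ (le_of_lt Ppos) fun s hs => ?_
  simp only [Finset.mem_Icc] at hs
  by_cases h : p ∣ s
  · have hp2 : 2 ≤ p := hp.out.two_le
    have hs_eq : s = p := by
      obtain ⟨c, rfl⟩ := h
      have : c = 1 := by
        have h0 : c ≠ 0 := by rintro rfl; simp at hs
        have h2 : c < 2 := by
          by_contra h2
          push_neg at h2
          have h3 : p * 2 ≤ p * c := Nat.mul_le_mul le_rfl h2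
          omega
        omega
      simp [this]
    subst hs_eq
    rw [norm_inv, Padic.norm_p, inv_inv]
  · rw [nrm_inv_nat_unit h]
    exact le_of_lt Pone

lemma nrm_fact_mul_Hs_le_one {r : ℕ} (hr : r < p) : ‖((Nat.factorial r : ℕ) : ℚ_[p]) * Hs p r‖ ≤ 1 := by
  rw [norm_mul]
  calc ‖((Nat.factorial r : ℕ) : ℚ_[p])‖ * ‖Hs p r‖ ≤ 1 * 1 :=
      mul_le_mul (nrm_nat _) (nrm_Hs_le_one hr) (norm_nonneg _) zero_le_one
    _ = 1 := one_mul 1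

-- factorial splitting (in ℕ)
lemma fact_split (m r : ℕ) : Nat.factorial (m + r) = Nat.factorial m * ∏ s ∈ Icc 1 r, (m + s) := by
  induction r with
  | zero => simp
  | succ r ih =>
    rw [Finset.prod_Icc_succ_top (Nat.le_add_left 1 r), ← mul_assoc, ← ih,
      ← Nat.add_assoc, Nat.factorial_succ, Nat.mul_comm]

lemma fact_split_cast (m r : ℕ) :
    ((Nat.factorial (m + r) : ℕ) : ℚ_[p]) = ((Nat.factorial m : ℕ) : ℚ_[p]) * ∏ s ∈ Icc 1 r, ((m : ℚ_[p]) + s) := by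
  rw [fact_split m r]
  push_cast
  ring

-- key expansion lemma
lemma exp_cong {c : ℚ_[p]} (hc : ‖c‖ ≤ (p:ℝ)⁻¹) {r : ℕ} (hr : r < p) :
    Cong p (∏ s ∈ Icc 1 r, (c + (s:ℚ_[p]))) (((Nat.factorial r : ℕ) : ℚ_[p]) * (1 + c * Hs p r)) := by
  induction r with
  | zero =>
    apply cong_of_eq
    simp [Hs]
  | succ r ih =>
    have hr' : r < p := lt_trans (Nat.lt_succ_self r) hr
    have key : (∏ s ∈ Icc 1 (r+1), (c + (s:ℚ_[p]))) - ((Nat.factorial (r+1) : ℕ) : ℚ_[p]) * (1 + c * Hs p (r+1))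
        = ((∏ s ∈ Icc 1 r, (c + (s:ℚ_[p]))) - ((Nat.factorial r : ℕ) : ℚ_[p]) * (1 + c * Hs p r)) * (c + (r+1))
          + c^2 * (((Nat.factorial r : ℕ) : ℚ_[p]) * Hs p r) := by
      have hne : ((r + 1 : ℕ) : ℚ_[p]) ≠ 0 :=
        Nat.cast_ne_zero.mpr (Nat.succ_ne_zero r)
      rw [Finset.prod_Icc_succ_top (Nat.le_add_left 1 r), Hs_succ]
      rw [Nat.factorial_succ]
      push_cast [Nat.cast_mul] at *
      field_simp
      ring
    unfold Cong
    rw [key]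
    refine le_trans (Padic.nonarchimedean _ _) (max_le ?_ ?_)
    · rw [norm_mul]
      have h1 : ‖c + ((r:ℚ_[p]) + 1)‖ ≤ 1 := by
        refine le_trans (Padic.nonarchimedean _ _) (max_le ?_ ?_)
        · exact le_trans hc Pinv_le_one
        · have := nrm_nat (p := p) (r + 1)
          push_cast at this
          exact this
      calc ‖_‖ * ‖c + ((r:ℚ_[p]) + 1)‖ ≤ (p:ℝ) ^ (-2:ℤ) * 1 := by
            refine mul_le_mul (ih hr') h1 (norm_nonneg _) P2nonneg
        _ = _ := mul_one _
    · rw [norm_mul, norm_pow]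
      calc ‖c‖^2 * ‖((Nat.factorial r : ℕ) : ℚ_[p]) * Hs p r‖ ≤ ((p:ℝ)⁻¹)^2 * 1 := by
            refine mul_le_mul (pow_le_pow_left₀ (norm_nonneg _) hc 2)
              (nrm_fact_mul_Hs_le_one hr') (norm_nonneg _) (by positivity)
        _ = (p:ℝ) ^ (-2:ℤ) := by rw [mul_one, P2_eq, sq]

-- Wolstenholme-lite: ‖H_{p-1}‖ ≤ 1/p  (needs p odd)
lemma nrm_Hs_pred (h3 : 3 < p) : ‖Hs p (p - 1)‖ ≤ (p:ℝ)⁻¹ := by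
  have hodd : ¬ p ∣ 2 := by
    intro h
    have := Nat.le_of_dvd (by norm_num) h
    omega
  have h2 : Hs p (p-1) + Hs p (p-1)
      = ∑ s ∈ Icc 1 (p-1), ((p : ℚ_[p]) * (((s : ℚ_[p]) * ((p - s : ℕ) : ℚ_[p])))⁻¹) := by
    have hrefl : Hs p (p-1) = ∑ s ∈ Icc 1 (p-1), (((p - s : ℕ) : ℚ_[p]))⁻¹ := by
      unfold Hs
      refine Finset.sum_nbij' (fun s => p - s) (fun s => p - s) ?_ ?_ ?_ ?_ ?_
      · intro a ha; simp only [Finset.mem_Icc] at *; omega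
      · intro a ha; simp only [Finset.mem_Icc] at *; omega
      · intro a ha; simp only [Finset.mem_Icc] at ha; show p - (p - a) = a; omega
      · intro a ha; simp only [Finset.mem_Icc] at ha; show p - (p - a) = a; omega
      · intro a ha
        simp only [Finset.mem_Icc] at ha
        show ((a : ℚ_[p]))⁻¹ = ((p - (p - a) : ℕ) : ℚ_[p])⁻¹
        congr 2
        omega
    nth_rewrite 2 [hrefl]
    unfold Hs
    rw [← Finset.sum_add_distrib]
    refine Finset.sum_congr rfl fun s hs => ?_
    simp only [Finset.mem_Icc] at hs
    have hs0 : ((s : ℚ_[p])) ≠ 0 := Nat.cast_ne_zero.mpr (by omega)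
    have hps0 : (((p - s : ℕ) : ℚ_[p])) ≠ 0 := Nat.cast_ne_zero.mpr (by omega)
    have hcast : ((p - s : ℕ) : ℚ_[p]) = (p : ℚ_[p]) - (s : ℚ_[p]) := by
      push_cast [Nat.cast_sub (by omega : s ≤ p)]
      ring
    rw [hcast] at hps0 ⊢
    field_simp
    ring
  have hnorm2 : ‖Hs p (p-1) + Hs p (p-1)‖ = ‖Hs p (p-1)‖ := by
    have : Hs p (p-1) + Hs p (p-1) = ((2:ℕ) : ℚ_[p]) * Hs p (p-1) := by push_cast; ring
    rw [this, norm_mul, nrm_nat_unit hodd, one_mul]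
  rw [← hnorm2, h2]
  refine norm_sum_le_of _ _ Pinv_nonneg fun s hs => ?_
  simp only [Finset.mem_Icc] at hs
  rw [norm_mul, Padic.norm_p, norm_inv]
  have hu : ‖(s : ℚ_[p]) * ((p - s : ℕ) : ℚ_[p])‖ = 1 := by
    rw [norm_mul, nrm_nat_unit (Nat.not_dvd_of_pos_of_lt (by omega) (by omega)),
      nrm_nat_unit (Nat.not_dvd_of_pos_of_lt (by omega) (by omega)), one_mul]
  rw [hu, inv_one, mul_one]

-- Fermat's little theorem for units of ℤ_[p]
lemma fermat_unit (z : ℤ_[p]) (hz : ‖z‖ = 1) : ‖((z : ℚ_[p])) ^ (p-1) - 1‖ ≤ (p:ℝ)⁻¹ := by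
  have hz0 : PadicInt.toZMod z ≠ 0 := by
    intro h0
    have : z ∈ RingHom.ker (PadicInt.toZMod : ℤ_[p] →+* ZMod p) := h0
    rw [PadicInt.ker_toZMod, PadicInt.maximalIdeal_eq_span_p, Ideal.mem_span_singleton] at this
    rw [← PadicInt.norm_lt_one_iff_dvd] at this
    rw [hz] at this
    exact lt_irrefl 1 this
  have hfer : PadicInt.toZMod (z ^ (p-1) - 1) = 0 := by
    rw [map_sub, map_pow, map_one, ZMod.pow_card_sub_one_eq_one hz0, sub_self]
  have : z ^ (p-1) - 1 ∈ RingHom.ker (PadicInt.toZMod : ℤ_[p] →+* ZMod p) := hfer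
  rw [PadicInt.ker_toZMod, PadicInt.maximalIdeal_eq_span_p, Ideal.mem_span_singleton] at this
  obtain ⟨c, hc⟩ := this
  have : ‖z ^ (p-1) - 1‖ ≤ (p:ℝ)⁻¹ := by
    rw [hc]
    refine le_trans (norm_mul_le _ _) ?_
    rw [PadicInt.norm_p]
    calc (p:ℝ)⁻¹ * ‖c‖ ≤ (p:ℝ)⁻¹ * 1 :=
        mul_le_mul_of_nonneg_left (PadicInt.norm_le_one c) Pinv_nonneg
      _ = _ := mul_one _
  calc ‖((z : ℚ_[p])) ^ (p-1) - 1‖ = ‖((z ^ (p-1) - 1 : ℤ_[p]) : ℚ_[p])‖ := by push_cast; ring_nf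
    _ = ‖z ^ (p-1) - 1‖ := PadicInt.padic_norm_e_of_padicInt _
    _ ≤ _ := this

-- binomial: (1+x)^i ≡ 1 + i x mod p²
lemma one_add_pow_cong {x : ℚ_[p]} (hx : ‖x‖ ≤ (p:ℝ)⁻¹) (i : ℕ) :
    Cong p ((1 + x) ^ i) (1 + (i : ℚ_[p]) * x) := by
  have h1x : ‖1 + x‖ ≤ 1 := by
    refine le_trans (Padic.nonarchimedean _ _) (max_le ?_ (le_trans hx Pinv_le_one))
    simp
  induction i with
  | zero => apply cong_of_eq; simp
  | succ i ih =>
    have key : (1 + x) ^ (i+1) - (1 + ((i+1 : ℕ) : ℚ_[p]) * x)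
        = ((1 + x) ^ i - (1 + (i : ℚ_[p]) * x)) * (1 + x) + (i : ℚ_[p]) * x^2 := by
      push_cast
      ring
    unfold Cong at *
    rw [key]
    refine le_trans (Padic.nonarchimedean _ _) (max_le ?_ ?_)
    · rw [norm_mul]
      calc ‖_‖ * ‖1 + x‖ ≤ (p:ℝ) ^ (-2:ℤ) * 1 := mul_le_mul ih h1x (norm_nonneg _) P2nonneg
        _ = _ := mul_one _
    · rw [norm_mul, norm_pow]
      calc ‖(i : ℚ_[p])‖ * ‖x‖^2 ≤ 1 * ((p:ℝ)⁻¹)^2 :=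
          mul_le_mul (nrm_nat i) (pow_le_pow_left₀ (norm_nonneg _) hx 2) (by positivity) zero_le_one
        _ = (p:ℝ) ^ (-2:ℤ) := by rw [one_mul, P2_eq, sq]

-- blocks W m = ∏_{s=1}^{p-1} (m p + s)
noncomputable def W (p : ℕ) [Fact p.Prime] (m : ℕ) : ℚ_[p] :=
  ∏ s ∈ Icc 1 (p-1), ((m * p + s : ℕ) : ℚ_[p])

lemma nrm_W (m : ℕ) : ‖W p m‖ = 1 := by
  unfold W
  rw [norm_prod]
  refine Finset.prod_eq_one fun s hs => ?_
  simp only [Finset.mem_Icc] at hs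
  have h2 : 2 ≤ p := hp.out.two_le
  refine nrm_nat_unit fun hdvd => ?_
  have : p ∣ s := (Nat.dvd_add_right (dvd_mul_left p m)).mp hdvd
  exact Nat.not_dvd_of_pos_of_lt (by omega) (by omega) this

lemma W_eq (m : ℕ) : W p m = ∏ s ∈ Icc 1 (p-1), (((m * p : ℕ) : ℚ_[p]) + (s : ℚ_[p])) := by
  unfold W
  refine Finset.prod_congr rfl fun s _ => ?_
  push_cast
  ring

lemma cong_W (h3 : 3 < p) (m : ℕ) : Cong p (W p m) ((Nat.factorial (p-1) : ℚ_[p])) := by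
  have hc : ‖((m * p : ℕ) : ℚ_[p])‖ ≤ (p:ℝ)⁻¹ := by
    rw [show m * p = p * m by ring]
    exact nrm_nat_mul_p m
  have h1 : Cong p (W p m) ((Nat.factorial (p-1) : ℚ_[p]) * (1 + ((m*p:ℕ):ℚ_[p]) * Hs p (p-1))) := by
    rw [W_eq]
    exact exp_cong hc (Nat.sub_lt hp.out.pos one_pos)
  refine cong_trans h1 ?_
  unfold Cong
  have : (Nat.factorial (p-1) : ℚ_[p]) * (1 + ((m*p:ℕ):ℚ_[p]) * Hs p (p-1))
      - (Nat.factorial (p-1) : ℚ_[p])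
      = (Nat.factorial (p-1) : ℚ_[p]) * (((m*p:ℕ):ℚ_[p]) * Hs p (p-1)) := by ring
  rw [this, norm_mul, norm_mul]
  calc ‖(Nat.factorial (p-1) : ℚ_[p])‖ * (‖((m*p:ℕ):ℚ_[p])‖ * ‖Hs p (p-1)‖)
      ≤ 1 * ((p:ℝ)⁻¹ * (p:ℝ)⁻¹) := by
        refine mul_le_mul (nrm_nat _) ?_ (by positivity) zero_le_one
        exact mul_le_mul hc (nrm_Hs_pred h3) (norm_nonneg _) Pinv_nonneg
    _ = (p:ℝ) ^ (-2:ℤ) := by rw [one_mul, P2_eq]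

-- (n p)! = p^n n! ∏ W m
lemma prod_Icc_top (c : ℚ_[p]) {n : ℕ} (hn : 1 ≤ n) :
    ∏ s ∈ Icc 1 n, (c + (s : ℚ_[p])) = (∏ s ∈ Icc 1 (n-1), (c + (s : ℚ_[p]))) * (c + (n : ℚ_[p])) := by
  obtain ⟨q, rfl⟩ : ∃ q, n = q + 1 := ⟨n - 1, by omega⟩
  simp only [Nat.add_sub_cancel]
  exact Finset.prod_Icc_succ_top (by omega) _

lemma fact_np (n : ℕ) : ((Nat.factorial (n * p)) : ℚ_[p])
    = (p : ℚ_[p]) ^ n * (Nat.factorial n : ℚ_[p]) * ∏ m ∈ range n, W p m := by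
  induction n with
  | zero => simp
  | succ n ih =>
    have e1 : (n + 1) * p = n * p + p := by ring
    have e2 : (∏ s ∈ Icc 1 p, (((n*p : ℕ) : ℚ_[p]) + (s:ℚ_[p])))
        = W p n * (((n*p : ℕ) : ℚ_[p]) + (p:ℚ_[p])) := by
      rw [prod_Icc_top _ hp.out.pos, W_eq]
    rw [e1, fact_split_cast (n*p) p, e2, ih, Finset.prod_range_succ, Nat.factorial_succ]
    push_cast
    ring

-- the Ljunggren-type congruence C(2pi, pi) ≡ C(2i, i) mod p²
lemma central_cong (h3 : 3 < p) (i : ℕ) :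
    Cong p ((Nat.choose (2*(p*i)) (p*i) : ℚ_[p])) ((Nat.choose (2*i) i : ℚ_[p])) := by
  set F : ℚ_[p] := (Nat.factorial (p-1) : ℚ_[p]) with hF
  set A : ℚ_[p] := ∏ m ∈ range (2*i), W p m with hA
  set B : ℚ_[p] := ∏ m ∈ range i, W p m with hB
  have hnA : ‖A‖ = 1 := by
    rw [hA, norm_prod]
    exact Finset.prod_eq_one fun m _ => nrm_W m
  have hnB : ‖B‖ = 1 := by
    rw [hB, norm_prod]
    exact Finset.prod_eq_one fun m _ => nrm_W m
  have hA0 : A ≠ 0 := by intro h0; rw [h0] at hnA; simp at hnA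
  have hB0 : B ≠ 0 := by intro h0; rw [h0] at hnB; simp at hnB
  have hp0 : (p : ℚ_[p]) ≠ 0 := Nat.cast_ne_zero.mpr hp.out.ne_zero
  have hfac : ∀ n : ℕ, ((Nat.factorial n : ℕ) : ℚ_[p]) ≠ 0 :=
    fun n => Nat.cast_ne_zero.mpr (Nat.factorial_ne_zero n)
  -- identity I3
  have I3 : ((Nat.choose (2*(p*i)) (p*i) : ℚ_[p])) * B^2 = ((Nat.choose (2*i) i : ℚ_[p])) * A := by
    have key1n : (Nat.choose (2*(p*i)) (p*i)) * ((p*i).factorial * (p*i).factorial)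
        = (2*(p*i)).factorial := by
      have := Nat.choose_mul_factorial_mul_factorial (show p*i ≤ 2*(p*i) by omega)
      rw [show 2*(p*i) - p*i = p*i by omega] at this
      linarith [this]
    have key2n : (Nat.choose (2*i) i) * ((i).factorial * (i).factorial)
        = (2*i).factorial := by
      have := Nat.choose_mul_factorial_mul_factorial (show i ≤ 2*i by omega)
      rw [show 2*i - i = i by omega] at this
      linarith [this]
    have key1 : ((Nat.choose (2*(p*i)) (p*i)) : ℚ_[p])
        * (((p*i).factorial : ℚ_[p]) * ((p*i).factorial : ℚ_[p]))
        = ((2*(p*i)).factorial : ℚ_[p]) := by exact_mod_cast congrArg (fun x : ℕ => (x : ℚ_[p])) key1n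
    have key2 : ((Nat.choose (2*i) i) : ℚ_[p])
        * (((i).factorial : ℚ_[p]) * ((i).factorial : ℚ_[p]))
        = ((2*i).factorial : ℚ_[p]) := by exact_mod_cast congrArg (fun x : ℕ => (x : ℚ_[p])) key2n
    have hf1 : ((Nat.factorial (2*(p*i))) : ℚ_[p])
        = (p : ℚ_[p]) ^ (2*i) * (Nat.factorial (2*i) : ℚ_[p]) * A := by
      rw [show 2*(p*i) = (2*i)*p by ring]
      exact fact_np (2*i)
    have hf2 : ((Nat.factorial (p*i)) : ℚ_[p])
        = (p : ℚ_[p]) ^ i * (Nat.factorial i : ℚ_[p]) * B := by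
      rw [show p*i = i*p by ring]
      exact fact_np i
    have hcan : ((p : ℚ_[p]) ^ i * ((i).factorial : ℚ_[p]))^2 ≠ 0 := by
      apply pow_ne_zero
      exact mul_ne_zero (pow_ne_zero _ hp0) (hfac i)
    apply mul_left_cancel₀ hcan
    calc ((p : ℚ_[p]) ^ i * ((i).factorial : ℚ_[p]))^2 * (((Nat.choose (2*(p*i)) (p*i) : ℚ_[p])) * B^2)
        = ((Nat.choose (2*(p*i)) (p*i)) : ℚ_[p])
          * (((p:ℚ_[p])^i * ((i).factorial : ℚ_[p]) * B) * ((p:ℚ_[p])^i * ((i).factorial : ℚ_[p]) * B)) := by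
          ring
      _ = ((2*(p*i)).factorial : ℚ_[p]) := by rw [← hf2]; exact key1
      _ = (p : ℚ_[p]) ^ (2*i) * (((Nat.choose (2*i) i) : ℚ_[p])
            * (((i).factorial : ℚ_[p]) * ((i).factorial : ℚ_[p]))) * A := by
          rw [key2, hf1]
      _ = ((p : ℚ_[p]) ^ i * ((i).factorial : ℚ_[p]))^2 * (((Nat.choose (2*i) i : ℚ_[p])) * A) := by
          rw [show 2*i = i*2 by ring, pow_mul]
          ring
  -- A ≡ F^(2i), B ≡ F^i
  have congA : Cong p A (F ^ (2*i)) := by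
    have := cong_prod (range (2*i)) (fun m => W p m) (fun _ => F)
      (fun m _ => le_of_eq (nrm_W m)) (fun _ _ => nrm_nat _) (fun m _ => cong_W h3 m)
    simpa [hA, Finset.prod_const, Finset.card_range] using this
  have congB : Cong p B (F ^ i) := by
    have := cong_prod (range i) (fun m => W p m) (fun _ => F)
      (fun m _ => le_of_eq (nrm_W m)) (fun _ _ => nrm_nat _) (fun m _ => cong_W h3 m)
    simpa [hB, Finset.prod_const, Finset.card_range] using this
  have congB2 : Cong p (B^2) (F ^ (2*i)) := by
    have h := cong_pow (le_of_eq hnB) (nrm_pow_le_one (nrm_nat _) i) congB 2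
    rwa [← pow_mul, show i*2 = 2*i by ring] at h
  have congAB : Cong p A (B^2) := cong_trans congA (cong_symm congB2)
  -- conclude
  unfold Cong
  have hnB2 : ‖B^2‖ = 1 := by rw [norm_pow, hnB, one_pow]
  calc ‖((Nat.choose (2*(p*i)) (p*i) : ℚ_[p])) - ((Nat.choose (2*i) i : ℚ_[p]))‖
      = ‖((Nat.choose (2*(p*i)) (p*i) : ℚ_[p])) - ((Nat.choose (2*i) i : ℚ_[p]))‖ * ‖B^2‖ := by
        rw [hnB2, mul_one]
    _ = ‖((Nat.choose (2*(p*i)) (p*i) : ℚ_[p])) * B^2 - ((Nat.choose (2*i) i : ℚ_[p])) * B^2‖ := by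
        rw [← norm_mul]; ring_nf
    _ = ‖((Nat.choose (2*i) i : ℚ_[p])) * A - ((Nat.choose (2*i) i : ℚ_[p])) * B^2‖ := by rw [I3]
    _ = ‖((Nat.choose (2*i) i : ℚ_[p]))‖ * ‖A - B^2‖ := by rw [← norm_mul]; ring_nf
    _ ≤ 1 * ((p:ℝ) ^ (-2:ℤ)) := mul_le_mul (nrm_nat _) congAB (norm_nonneg _) zero_le_one
    _ = _ := one_mul _

lemma nrm_nat_dvd {n : ℕ} (h : p ∣ n) : ‖(n : ℚ_[p])‖ ≤ (p:ℝ)⁻¹ := by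
  obtain ⟨c, rfl⟩ := h
  exact nrm_nat_mul_p c

lemma nrm_one_add {A : ℚ_[p]} (hA : ‖A‖ ≤ 1) : ‖1 + A‖ ≤ 1 := by
  refine le_trans (Padic.nonarchimedean _ _) (max_le ?_ hA)
  simp

lemma cong_scale {u x y : ℚ_[p]} (hu : ‖u‖ ≤ 1) (h : Cong p x y) : Cong p (u*x) (u*y) := by
  unfold Cong at *
  have e : u*x - u*y = u * (x - y) := by ring
  rw [e, norm_mul]
  calc ‖u‖ * ‖x - y‖ ≤ 1 * ((p:ℝ) ^ (-2:ℤ)) := mul_le_mul hu h (norm_nonneg _) zero_le_one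
    _ = _ := one_mul _

lemma cong_one_add_mul {A B : ℚ_[p]} (hA : ‖A‖ ≤ (p:ℝ)⁻¹) (hB : ‖B‖ ≤ (p:ℝ)⁻¹) :
    Cong p ((1+A)*(1+B)) (1 + (A + B)) := by
  unfold Cong
  have e : (1+A)*(1+B) - (1 + (A+B)) = A * B := by ring
  rw [e, norm_mul, P2_eq]
  exact mul_le_mul hA hB (norm_nonneg _) Pinv_nonneg

-- t^(pi) ≡ t^i (1 + p i q)
lemma tpow_cong {t q : ℚ_[p]} (ht : ‖t‖ ≤ 1) (hq : ‖q‖ ≤ 1)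
    (htq : t ^ (p-1) = 1 + (p:ℚ_[p]) * q) (i : ℕ) :
    Cong p (t ^ (p*i)) (t^i * (1 + (p:ℚ_[p]) * (i:ℚ_[p]) * q)) := by
  have hpq : ‖(p:ℚ_[p]) * q‖ ≤ (p:ℝ)⁻¹ := by
    rw [norm_mul, Padic.norm_p]
    calc (p:ℝ)⁻¹ * ‖q‖ ≤ (p:ℝ)⁻¹ * 1 := mul_le_mul_of_nonneg_left hq Pinv_nonneg
      _ = _ := mul_one _
  have htp : t ^ p = t * (1 + (p:ℚ_[p]) * q) := by
    have hpos := hp.out.pos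
    have hexp : p - 1 + 1 = p := by omega
    have e1 : t ^ (p - 1 + 1) = t * t ^ (p-1) := pow_succ' t (p-1)
    rw [hexp] at e1
    rw [e1, htq]
  have e : t ^ (p*i) = t^i * ((1 + (p:ℚ_[p])*q))^i := by
    rw [pow_mul, htp, mul_pow]
  rw [e]
  have h1 := one_add_pow_cong hpq i
  have h2 : Cong p (t^i * (1 + (p:ℚ_[p])*q)^i) (t^i * (1 + (i:ℚ_[p]) * ((p:ℚ_[p])*q))) :=
    cong_scale (nrm_pow_le_one ht i) h1
  refine cong_trans h2 (cong_of_eq ?_)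
  ring

-- I1 : the fundamental factorization identity
lemma I1 (i j : ℕ) :
    ((Nat.choose (2*(p*i+j)) (p*i+j) : ℚ_[p]))
        * (∏ s ∈ Icc 1 j, ((p*i + s : ℕ) : ℚ_[p]))^2
      = ((Nat.choose (2*(p*i)) (p*i) : ℚ_[p]))
        * ∏ s ∈ Icc 1 (2*j), ((2*(p*i) + s : ℕ) : ℚ_[p]) := by
  set N := p*i + j with hN
  have hfacne : ∀ n : ℕ, ((Nat.factorial n : ℕ) : ℚ_[p]) ≠ 0 :=
    fun n => Nat.cast_ne_zero.mpr (Nat.factorial_ne_zero n)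
  have keyBig : ((Nat.choose (2*N) N : ℚ_[p])) * ((Nat.factorial N : ℚ_[p]) * (Nat.factorial N : ℚ_[p]))
      = (Nat.factorial (2*N) : ℚ_[p]) := by
    have h := Nat.choose_mul_factorial_mul_factorial (show N ≤ 2*N by omega)
    rw [show 2*N - N = N by omega, mul_assoc] at h
    exact_mod_cast congrArg (fun x : ℕ => (x : ℚ_[p])) h
  have keyMid : ((Nat.choose (2*(p*i)) (p*i) : ℚ_[p]))
      * ((Nat.factorial (p*i) : ℚ_[p]) * (Nat.factorial (p*i) : ℚ_[p]))
      = (Nat.factorial (2*(p*i)) : ℚ_[p]) := by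
    have h := Nat.choose_mul_factorial_mul_factorial (show p*i ≤ 2*(p*i) by omega)
    rw [show 2*(p*i) - p*i = p*i by omega, mul_assoc] at h
    exact_mod_cast congrArg (fun x : ℕ => (x : ℚ_[p])) h
  have hsplitN : (Nat.factorial N : ℚ_[p])
      = (Nat.factorial (p*i) : ℚ_[p]) * ∏ s ∈ Icc 1 j, ((p*i + s : ℕ) : ℚ_[p]) := by
    have := fact_split_cast (p := p) (p*i) j
    rw [this]
    congr 1
    refine Finset.prod_congr rfl fun s _ => ?_
    push_cast
    ring
  have hsplit2N : (Nat.factorial (2*N) : ℚ_[p])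
      = (Nat.factorial (2*(p*i)) : ℚ_[p]) * ∏ s ∈ Icc 1 (2*j), ((2*(p*i) + s : ℕ) : ℚ_[p]) := by
    have h := fact_split_cast (p := p) (2*(p*i)) (2*j)
    rw [show 2*(p*i) + 2*j = 2*N by omega] at h
    rw [h]
    congr 1
    refine Finset.prod_congr rfl fun s _ => ?_
    push_cast
    ring
  have hcan : ((Nat.factorial (p*i) : ℚ_[p]) * (Nat.factorial (p*i) : ℚ_[p])) ≠ 0 :=
    mul_ne_zero (hfacne _) (hfacne _)
  apply mul_left_cancel₀ hcan
  calc ((Nat.factorial (p*i) : ℚ_[p]) * (Nat.factorial (p*i) : ℚ_[p]))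
        * (((Nat.choose (2*N) N : ℚ_[p])) * (∏ s ∈ Icc 1 j, ((p*i + s : ℕ) : ℚ_[p]))^2)
      = ((Nat.choose (2*N) N : ℚ_[p]))
        * ((Nat.factorial N : ℚ_[p]) * (Nat.factorial N : ℚ_[p])) := by
        rw [hsplitN]; ring
    _ = (Nat.factorial (2*N) : ℚ_[p]) := keyBig
    _ = (Nat.factorial (2*(p*i)) : ℚ_[p]) * ∏ s ∈ Icc 1 (2*j), ((2*(p*i) + s : ℕ) : ℚ_[p]) :=
        hsplit2N
    _ = _ := by rw [← keyMid]; ring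

lemma nrm_Qd {i j : ℕ} (hj : j < p) : ‖∏ s ∈ Icc 1 j, ((p*i + s : ℕ) : ℚ_[p])‖ = 1 := by
  rw [norm_prod]
  refine Finset.prod_eq_one fun s hs => ?_
  simp only [Finset.mem_Icc] at hs
  refine nrm_nat_unit fun hdvd => ?_
  have : p ∣ s := (Nat.dvd_add_right (dvd_mul_right p i)).mp hdvd
  exact Nat.not_dvd_of_pos_of_lt (by omega) (by omega) this

lemma nrm_Pn_unit {i j : ℕ} (hj : 2*j < p) :
    ‖∏ s ∈ Icc 1 (2*j), ((2*(p*i) + s : ℕ) : ℚ_[p])‖ = 1 := by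
  rw [norm_prod]
  refine Finset.prod_eq_one fun s hs => ?_
  simp only [Finset.mem_Icc] at hs
  refine nrm_nat_unit fun hdvd => ?_
  have h1 : p ∣ 2*(p*i) := ⟨2*i, by ring⟩
  have : p ∣ s := (Nat.dvd_add_right h1).mp hdvd
  exact Nat.not_dvd_of_pos_of_lt (by omega) (by omega) this

lemma nrm_Pn_small {i j : ℕ} (hj : p ≤ 2*j) :
    ‖∏ s ∈ Icc 1 (2*j), ((2*(p*i) + s : ℕ) : ℚ_[p])‖ ≤ (p:ℝ)⁻¹ := by
  have hpmem : p ∈ Icc 1 (2*j) := by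
    simp only [Finset.mem_Icc]
    exact ⟨hp.out.pos, hj⟩
  rw [← Finset.mul_prod_erase _ _ hpmem, norm_mul]
  have h1 : ‖((2*(p*i) + p : ℕ) : ℚ_[p])‖ ≤ (p:ℝ)⁻¹ := nrm_nat_dvd ⟨2*i+1, by ring⟩
  have h2 : ‖∏ s ∈ (Icc 1 (2*j)).erase p, ((2*(p*i) + s : ℕ) : ℚ_[p])‖ ≤ 1 :=
    norm_prod_le_one _ _ fun s _ => nrm_nat _
  calc ‖((2*(p*i) + p : ℕ) : ℚ_[p])‖ * ‖_‖ ≤ (p:ℝ)⁻¹ * 1 :=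
      mul_le_mul h1 h2 (norm_nonneg _) Pinv_nonneg
    _ = _ := mul_one _

lemma nrm_mul_le_one {x y : ℚ_[p]} (hx : ‖x‖ ≤ 1) (hy : ‖y‖ ≤ 1) : ‖x * y‖ ≤ 1 := by
  rw [norm_mul]
  calc ‖x‖ * ‖y‖ ≤ 1 * 1 := mul_le_mul hx hy (norm_nonneg _) zero_le_one
    _ = 1 := one_mul 1

lemma nrm_pi_mul {X : ℚ_[p]} (i : ℕ) (hX : ‖X‖ ≤ 1) :
    ‖(p:ℚ_[p]) * (i:ℚ_[p]) * X‖ ≤ (p:ℝ)⁻¹ := by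
  rw [norm_mul, norm_mul, Padic.norm_p]
  calc (p:ℝ)⁻¹ * ‖(i:ℚ_[p])‖ * ‖X‖ ≤ (p:ℝ)⁻¹ * 1 * 1 := by
        refine mul_le_mul (mul_le_mul_of_nonneg_left (nrm_nat i) Pinv_nonneg) hX (norm_nonneg _) ?_
        positivity
    _ = (p:ℝ)⁻¹ := by ring

-- the per-term functions
noncomputable def fT (p : ℕ) [Fact p.Prime] (t : ℚ_[p]) (m : ℕ) : ℚ_[p] :=
  (Nat.choose (2*m) m : ℚ_[p])^3 * t^m

noncomputable def gT (p : ℕ) [Fact p.Prime] (t q : ℚ_[p]) (i j : ℕ) : ℚ_[p] :=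
  (Nat.choose (2*i) i : ℚ_[p])^3 * (Nat.choose (2*j) j : ℚ_[p])^3 * (t^i * t^j)
    * (1 + (p:ℚ_[p]) * (i:ℚ_[p]) * (6 * (Hs p (2*j) - Hs p j) + q))

lemma nrm_X_case1 {q : ℚ_[p]} (hq : ‖q‖ ≤ 1) {j : ℕ} (hj2 : 2*j < p) :
    ‖6 * (Hs p (2*j) - Hs p j) + q‖ ≤ 1 := by
  have h6 : ‖(6:ℚ_[p])‖ ≤ 1 := by
    have := nrm_nat (p := p) 6
    simpa using this
  refine le_trans (Padic.nonarchimedean _ _) (max_le ?_ hq)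
  refine nrm_mul_le_one h6 ?_
  rw [sub_eq_add_neg]
  refine le_trans (Padic.nonarchimedean _ _) (max_le (nrm_Hs_le_one hj2) ?_)
  rw [norm_neg]
  exact nrm_Hs_le_one (by omega)

lemma nrm_X_case2 {q : ℚ_[p]} (hq : ‖q‖ ≤ 1) {j : ℕ} (hj : j < p) (h3 : 3 < p) :
    ‖6 * (Hs p (2*j) - Hs p j) + q‖ ≤ (p:ℝ) := by
  have h6 : ‖(6:ℚ_[p])‖ ≤ 1 := by
    have := nrm_nat (p := p) 6
    simpa using this
  refine le_trans (Padic.nonarchimedean _ _) (max_le ?_ (le_trans hq (le_of_lt Pone)))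
  calc ‖(6:ℚ_[p]) * (Hs p (2*j) - Hs p j)‖ ≤ 1 * (p:ℝ) := by
        rw [norm_mul]
        refine mul_le_mul h6 ?_ (norm_nonneg _) zero_le_one
        rw [sub_eq_add_neg]
        refine le_trans (Padic.nonarchimedean _ _) (max_le (nrm_Hs_le_p (by omega)) ?_)
        rw [norm_neg]
        exact le_trans (nrm_Hs_le_one (by omega)) (le_of_lt Pone)
    _ = (p:ℝ) := one_mul _

lemma nrm_gT_le {t q : ℚ_[p]} (ht : ‖t‖ ≤ 1) (hq : ‖q‖ ≤ 1) {i j : ℕ} (hj : j < p) (h3 : 3 < p) :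
    ‖gT p t q i j‖ ≤ 1 := by
  unfold gT
  refine nrm_mul_le_one (nrm_mul_le_one (nrm_mul_le_one (nrm_pow_le_one (nrm_nat _) 3)
    (nrm_pow_le_one (nrm_nat _) 3)) (nrm_mul_le_one (nrm_pow_le_one ht i) (nrm_pow_le_one ht j)))
    (nrm_one_add ?_)
  rw [norm_mul, norm_mul, Padic.norm_p]
  calc (p:ℝ)⁻¹ * ‖(i:ℚ_[p])‖ * ‖_‖ ≤ (p:ℝ)⁻¹ * 1 * (p:ℝ) := by
        refine mul_le_mul (mul_le_mul_of_nonneg_left (nrm_nat i) Pinv_nonneg)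
          (nrm_X_case2 hq hj h3) (norm_nonneg _) ?_
        positivity
    _ = 1 := by field_simp

-- case 2:  p ≤ 2j :  both sides are ≡ 0 mod p²
lemma nrm_fT_small {t : ℚ_[p]} (ht : ‖t‖ ≤ 1) {i j : ℕ} (hj : j < p) (h2j : p ≤ 2*j) :
    ‖fT p t (p*i + j)‖ ≤ (p:ℝ) ^ (-2:ℤ) := by
  have hQ : ‖(∏ s ∈ Icc 1 j, ((p*i + s : ℕ) : ℚ_[p]))‖ = 1 := nrm_Qd hj
  have hCbig : ‖(Nat.choose (2*(p*i+j)) (p*i+j) : ℚ_[p])‖ ≤ (p:ℝ)⁻¹ := by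
    have h := I1 (p := p) i j
    have hnorm := congrArg (fun x : ℚ_[p] => ‖x‖) h
    simp only [norm_mul, norm_pow, hQ, one_pow, mul_one] at hnorm
    rw [hnorm]
    calc ‖(Nat.choose (2*(p*i)) (p*i) : ℚ_[p])‖ * ‖∏ s ∈ Icc 1 (2*j), ((2*(p*i) + s : ℕ) : ℚ_[p])‖
        ≤ 1 * (p:ℝ)⁻¹ := mul_le_mul (nrm_nat _) (nrm_Pn_small h2j) (norm_nonneg _) zero_le_one
      _ = _ := one_mul _
  unfold fT
  rw [norm_mul, norm_pow]
  calc ‖(Nat.choose (2*(p*i+j)) (p*i+j) : ℚ_[p])‖^3 * ‖t^(p*i+j)‖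
      ≤ ((p:ℝ)⁻¹)^3 * 1 := by
        refine mul_le_mul (pow_le_pow_left₀ (norm_nonneg _) hCbig 3)
          (nrm_pow_le_one ht _) (norm_nonneg _) (by positivity)
    _ = (p:ℝ) ^ (-3:ℤ) := by
        rw [mul_one, show (-3:ℤ) = -(3:ℕ) by norm_num, zpow_neg, zpow_natCast, inv_pow]
    _ ≤ _ := P3_le_P2

lemma nrm_gT_small {t q : ℚ_[p]} (ht : ‖t‖ ≤ 1) (hq : ‖q‖ ≤ 1) {i j : ℕ}
    (hj : j < p) (h2j : p ≤ 2*j) (h3 : 3 < p) :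
    ‖gT p t q i j‖ ≤ (p:ℝ) ^ (-2:ℤ) := by
  have hCj : ‖(Nat.choose (2*j) j : ℚ_[p])‖ ≤ (p:ℝ)⁻¹ := by
    refine nrm_nat_dvd ?_
    have := Nat.Prime.dvd_choose_add hp.out (by omega : j < p) (by omega : j < p)
      (by omega : p ≤ j + j)
    rwa [show j + j = 2*j by omega] at this
  unfold gT
  rw [norm_mul, norm_mul, norm_mul]
  have h1 : ‖(Nat.choose (2*i) i : ℚ_[p])^3‖ ≤ 1 := nrm_pow_le_one (nrm_nat _) 3
  have h2 : ‖(Nat.choose (2*j) j : ℚ_[p])^3‖ ≤ ((p:ℝ)⁻¹)^3 := by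
    rw [norm_pow]
    exact pow_le_pow_left₀ (norm_nonneg _) hCj 3
  have h3' : ‖t^i * t^j‖ ≤ 1 := nrm_mul_le_one (nrm_pow_le_one ht i) (nrm_pow_le_one ht j)
  have h4 : ‖1 + (p:ℚ_[p]) * (i:ℚ_[p]) * (6 * (Hs p (2*j) - Hs p j) + q)‖ ≤ 1 := by
    refine nrm_one_add ?_
    rw [norm_mul, norm_mul, Padic.norm_p]
    calc (p:ℝ)⁻¹ * ‖(i:ℚ_[p])‖ * ‖_‖ ≤ (p:ℝ)⁻¹ * 1 * (p:ℝ) := by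
          refine mul_le_mul (mul_le_mul_of_nonneg_left (nrm_nat i) Pinv_nonneg)
            (nrm_X_case2 hq hj h3) (norm_nonneg _) (by positivity)
      _ = 1 := by field_simp
  calc ‖(Nat.choose (2*i) i : ℚ_[p])^3‖ * ‖(Nat.choose (2*j) j : ℚ_[p])^3‖ * ‖t^i * t^j‖ * ‖_‖
      ≤ 1 * ((p:ℝ)⁻¹)^3 * 1 * 1 := by
        refine mul_le_mul (mul_le_mul (mul_le_mul h1 h2 (norm_nonneg _) zero_le_one)
          h3' (norm_nonneg _) (by positivity)) h4 (norm_nonneg _) (by positivity)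
    _ = (p:ℝ) ^ (-3:ℤ) := by
        rw [show (-3:ℤ) = -(3:ℕ) by norm_num, zpow_neg, zpow_natCast, inv_pow]
        ring
    _ ≤ _ := P3_le_P2

-- case 1 : 2j < p
lemma term_cong1 {t q : ℚ_[p]} (ht : ‖t‖ ≤ 1) (hq : ‖q‖ ≤ 1)
    (htq : t ^ (p-1) = 1 + (p:ℚ_[p]) * q) (h3 : 3 < p) (i : ℕ) {j : ℕ} (hj2 : 2*j < p) :
    Cong p (fT p t (p*i + j)) (gT p t q i j) := by
  have hj : j < p := by omega
  set Qd' : ℚ_[p] := ∏ s ∈ Icc 1 j, ((p*i + s : ℕ) : ℚ_[p]) with hQd'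
  set Pn : ℚ_[p] := ∏ s ∈ Icc 1 (2*j), ((2*(p*i) + s : ℕ) : ℚ_[p]) with hPn
  set Cbig : ℚ_[p] := (Nat.choose (2*(p*i+j)) (p*i+j) : ℚ_[p]) with hCbig
  set Cmid : ℚ_[p] := (Nat.choose (2*(p*i)) (p*i) : ℚ_[p]) with hCmid
  set Csm : ℚ_[p] := (Nat.choose (2*i) i : ℚ_[p]) with hCsm
  set Cj : ℚ_[p] := (Nat.choose (2*j) j : ℚ_[p]) with hCj
  set F1 : ℚ_[p] := (Nat.factorial j : ℚ_[p]) with hF1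
  set F2 : ℚ_[p] := (Nat.factorial (2*j) : ℚ_[p]) with hF2
  set H2 : ℚ_[p] := Hs p (2*j) with hH2
  set H1 : ℚ_[p] := Hs p j with hH1
  set c1 : ℚ_[p] := ((p*i : ℕ) : ℚ_[p]) with hc1
  set c2 : ℚ_[p] := ((2*(p*i) : ℕ) : ℚ_[p]) with hc2
  -- norms
  have hQn : ‖Qd'‖ = 1 := nrm_Qd hj
  have hQn6 : ‖Qd'^6‖ = 1 := by rw [norm_pow, hQn, one_pow]
  have hPl : ‖Pn‖ ≤ 1 := norm_prod_le_one _ _ fun s _ => nrm_nat _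
  have hc1n : ‖c1‖ ≤ (p:ℝ)⁻¹ := nrm_nat_mul_p i
  have hc2n : ‖c2‖ ≤ (p:ℝ)⁻¹ := by
    rw [hc2, show 2*(p*i) = p*(2*i) by ring]
    exact nrm_nat_mul_p (2*i)
  have hH2n : ‖H2‖ ≤ 1 := nrm_Hs_le_one hj2
  have hH1n : ‖H1‖ ≤ 1 := nrm_Hs_le_one hj
  have hc2H : ‖c2 * H2‖ ≤ (p:ℝ)⁻¹ := by
    rw [norm_mul]
    calc ‖c2‖ * ‖H2‖ ≤ (p:ℝ)⁻¹ * 1 := mul_le_mul hc2n hH2n (norm_nonneg _) Pinv_nonneg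
      _ = _ := mul_one _
  have hc1H : ‖c1 * H1‖ ≤ (p:ℝ)⁻¹ := by
    rw [norm_mul]
    calc ‖c1‖ * ‖H1‖ ≤ (p:ℝ)⁻¹ * 1 := mul_le_mul hc1n hH1n (norm_nonneg _) Pinv_nonneg
      _ = _ := mul_one _
  have hn3 : ‖(3:ℚ_[p])‖ ≤ 1 := by
    have := nrm_nat (p := p) 3
    simpa using this
  have hn6 : ‖(6:ℚ_[p])‖ ≤ 1 := by
    have := nrm_nat (p := p) 6
    simpa using this
  have hpq : ‖(p:ℚ_[p]) * (i:ℚ_[p]) * q‖ ≤ (p:ℝ)⁻¹ := nrm_pi_mul i hq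
  have h1a : ‖1 + 3 * (c2 * H2)‖ ≤ 1 := by
    refine nrm_one_add (nrm_mul_le_one hn3 (le_trans hc2H Pinv_le_one))
  have h1b : ‖1 + (p:ℚ_[p]) * (i:ℚ_[p]) * q‖ ≤ 1 := nrm_one_add (le_trans hpq Pinv_le_one)
  have h3c2H : ‖3 * (c2 * H2)‖ ≤ (p:ℝ)⁻¹ := by
    rw [norm_mul]
    calc ‖(3:ℚ_[p])‖ * ‖c2 * H2‖ ≤ 1 * (p:ℝ)⁻¹ :=
        mul_le_mul hn3 hc2H (norm_nonneg _) zero_le_one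
      _ = _ := one_mul _
  have h6c1H : ‖6 * (c1 * H1)‖ ≤ (p:ℝ)⁻¹ := by
    rw [norm_mul]
    calc ‖(6:ℚ_[p])‖ * ‖c1 * H1‖ ≤ 1 * (p:ℝ)⁻¹ :=
        mul_le_mul hn6 hc1H (norm_nonneg _) zero_le_one
      _ = _ := one_mul _
  have hD : ‖(p:ℚ_[p]) * (i:ℚ_[p]) * (6 * (H2 - H1) + q)‖ ≤ (p:ℝ)⁻¹ :=
    nrm_pi_mul i (nrm_X_case1 hq hj2)
  -- the common middle term
  set M : ℚ_[p] := Csm^3 * F2^3 * (t^i * t^j) * (1 + (p:ℚ_[p]) * (i:ℚ_[p]) * (6 * H2 + q))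
    with hM
  -- cast expansions of the products
  have ePn : Pn = ∏ s ∈ Icc 1 (2*j), (c2 + (s : ℚ_[p])) := by
    rw [hPn, hc2]
    refine Finset.prod_congr rfl fun s _ => ?_
    push_cast
    ring
  have eQd : Qd' = ∏ s ∈ Icc 1 j, (c1 + (s : ℚ_[p])) := by
    rw [hQd', hc1]
    refine Finset.prod_congr rfl fun s _ => ?_
    push_cast
    ring
  -- LHS chain
  have congA : Cong p (Cmid^3) (Csm^3) :=
    cong_pow (nrm_nat _) (nrm_nat _) (central_cong h3 i) 3
  have congPn : Cong p Pn (F2 * (1 + c2 * H2)) := by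
    rw [ePn]
    exact exp_cong hc2n hj2
  have congPn3 : Cong p (Pn^3) (F2^3 * (1 + 3 * (c2 * H2))) := by
    have s1 : Cong p (Pn^3) ((F2 * (1 + c2 * H2))^3) :=
      cong_pow hPl (nrm_mul_le_one (nrm_nat _) (nrm_one_add (le_trans hc2H Pinv_le_one)))
        congPn 3
    refine cong_trans s1 ?_
    unfold Cong
    have e : (F2 * (1 + c2 * H2))^3 - F2^3 * (1 + 3 * (c2 * H2))
        = F2^3 * ((c2*H2)^2 * (3 + c2*H2)) := by ring
    rw [e, norm_mul]
    calc ‖F2^3‖ * ‖(c2*H2)^2 * (3 + c2*H2)‖ ≤ 1 * ((p:ℝ) ^ (-2:ℤ)) := by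
          refine mul_le_mul (nrm_pow_le_one (nrm_nat _) 3) ?_ (norm_nonneg _) zero_le_one
          rw [norm_mul, norm_pow, P2_eq]
          have h3c : ‖(3:ℚ_[p]) + c2*H2‖ ≤ 1 :=
            le_trans (Padic.nonarchimedean _ _)
              (max_le hn3 (le_trans hc2H Pinv_le_one))
          calc ‖c2*H2‖^2 * ‖(3:ℚ_[p]) + c2*H2‖ ≤ ((p:ℝ)⁻¹)^2 * 1 :=
              mul_le_mul (pow_le_pow_left₀ (norm_nonneg _) hc2H 2) h3c (norm_nonneg _)
                (by positivity)
            _ = (p:ℝ)⁻¹ * (p:ℝ)⁻¹ := by rw [mul_one, sq]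
      _ = _ := one_mul _
  have congT : Cong p (t^(p*i)) (t^i * (1 + (p:ℚ_[p]) * (i:ℚ_[p]) * q)) := tpow_cong ht hq htq i
  have hBn1 : ‖Csm^3‖ ≤ 1 := nrm_pow_le_one (nrm_nat _) 3
  have hBn2 : ‖F2^3 * (1 + 3 * (c2*H2))‖ ≤ 1 :=
    nrm_mul_le_one (nrm_pow_le_one (nrm_nat _) 3) h1a
  have hBn3 : ‖t^i * (1 + (p:ℚ_[p]) * (i:ℚ_[p]) * q)‖ ≤ 1 :=
    nrm_mul_le_one (nrm_pow_le_one ht i) h1b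
  have c12 : Cong p (Cmid^3 * Pn^3) (Csm^3 * (F2^3 * (1 + 3 * (c2*H2)))) :=
    cong_mul (nrm_pow_le_one hPl 3) hBn1 congA congPn3
  have c34 : Cong p (t^(p*i) * t^j) ((t^i * (1 + (p:ℚ_[p]) * (i:ℚ_[p]) * q)) * t^j) :=
    cong_mul (nrm_pow_le_one ht j) hBn3 congT (cong_refl _)
  have c1234 : Cong p (Cmid^3 * Pn^3 * (t^(p*i) * t^j))
      ((Csm^3 * (F2^3 * (1 + 3 * (c2*H2)))) * ((t^i * (1 + (p:ℚ_[p]) * (i:ℚ_[p]) * q)) * t^j)) :=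
    cong_mul (nrm_mul_le_one (nrm_pow_le_one ht _) (nrm_pow_le_one ht _))
      (nrm_mul_le_one hBn1 hBn2) c12 c34
  -- now to the middle M
  have hc2e : c2 = 2 * ((p:ℚ_[p]) * (i:ℚ_[p])) := by
    rw [hc2]
    push_cast
    ring
  have hu1 : ‖Csm^3 * F2^3 * (t^i * t^j)‖ ≤ 1 :=
    nrm_mul_le_one (nrm_mul_le_one hBn1 (nrm_pow_le_one (nrm_nat _) 3))
      (nrm_mul_le_one (nrm_pow_le_one ht i) (nrm_pow_le_one ht j))
  have cmid1 : Cong p ((Csm^3 * (F2^3 * (1 + 3 * (c2*H2)))) * ((t^i * (1 + (p:ℚ_[p]) * (i:ℚ_[p]) * q)) * t^j)) M := by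
    have e : (Csm^3 * (F2^3 * (1 + 3 * (c2*H2)))) * ((t^i * (1 + (p:ℚ_[p]) * (i:ℚ_[p]) * q)) * t^j)
        = (Csm^3 * F2^3 * (t^i * t^j)) * ((1 + 3 * (c2*H2)) * (1 + (p:ℚ_[p]) * (i:ℚ_[p]) * q)) := by
      ring
    rw [e]
    have step := cong_scale hu1 (cong_one_add_mul h3c2H hpq)
    refine cong_trans step (cong_of_eq ?_)
    rw [hM, hc2e]
    ring
  have congL : Cong p (Cmid^3 * Pn^3 * (t^(p*i) * t^j)) M := cong_trans c1234 cmid1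
  -- RHS chain
  have congQd : Cong p Qd' (F1 * (1 + c1 * H1)) := by
    rw [eQd]
    exact exp_cong hc1n hj
  have congQd6 : Cong p (Qd'^6) (F1^6 * (1 + 6 * (c1 * H1))) := by
    have s1 : Cong p (Qd'^6) ((F1 * (1 + c1 * H1))^6) :=
      cong_pow (le_of_eq hQn) (nrm_mul_le_one (nrm_nat _) (nrm_one_add (le_trans hc1H Pinv_le_one)))
        congQd 6
    refine cong_trans s1 ?_
    have e : (F1 * (1 + c1 * H1))^6 = F1^6 * (1 + c1*H1)^6 := by ring
    rw [e]
    have hF16 : ‖F1 ^ 6‖ ≤ 1 := by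
      rw [hF1]
      exact nrm_pow_le_one (nrm_nat _) 6
    have s2 := cong_scale hF16 (one_add_pow_cong hc1H 6)
    refine cong_trans s2 (cong_of_eq ?_)
    push_cast
    ring
  have hCjF : Cj^3 * F1^6 = F2^3 := by
    have h := Nat.choose_mul_factorial_mul_factorial (show j ≤ 2*j by omega)
    rw [show 2*j - j = j by omega, mul_assoc] at h
    have hcast : Cj * (F1 * F1) = F2 := by
      rw [hCj, hF1, hF2]
      exact_mod_cast congrArg (fun x : ℕ => (x : ℚ_[p])) h
    calc Cj^3 * F1^6 = (Cj * (F1 * F1))^3 := by ring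
      _ = F2^3 := by rw [hcast]
  have hgT : ‖gT p t q i j‖ ≤ 1 := nrm_gT_le ht hq hj h3
  have congR : Cong p (gT p t q i j * Qd'^6) M := by
    have s1 : Cong p (gT p t q i j * Qd'^6) (gT p t q i j * (F1^6 * (1 + 6 * (c1 * H1)))) :=
      cong_scale hgT congQd6
    refine cong_trans s1 ?_
    have e : gT p t q i j * (F1^6 * (1 + 6 * (c1 * H1)))
        = (Csm^3 * (Cj^3 * F1^6) * (t^i * t^j))
          * ((1 + (p:ℚ_[p]) * (i:ℚ_[p]) * (6 * (H2 - H1) + q)) * (1 + 6 * (c1 * H1))) := by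
      unfold gT
      rw [← hCsm, ← hCj, ← hH2, ← hH1]
      ring
    rw [e, hCjF]
    have step := cong_scale hu1 (cong_one_add_mul hD h6c1H)
    refine cong_trans step (cong_of_eq ?_)
    rw [hM]
    have hc1e : c1 = (p:ℚ_[p]) * (i:ℚ_[p]) := by
      rw [hc1]
      push_cast
      ring
    rw [hc1e]
    ring
  -- combine
  refine cong_unit_cancel hQn6 ?_
  have eL : fT p t (p*i + j) * Qd'^6 = Cmid^3 * Pn^3 * (t^(p*i) * t^j) := by
    have e0 : fT p t (p*i + j) * Qd'^6 = (Cbig * Qd'^2)^3 * (t^(p*i) * t^j) := by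
      unfold fT
      rw [← hCbig, pow_add]
      ring
    rw [e0, I1 i j]
    ring
  rw [eL]
  exact cong_trans congL (cong_symm congR)

-- combined per-term congruence
lemma term_cong {t q : ℚ_[p]} (ht : ‖t‖ ≤ 1) (hq : ‖q‖ ≤ 1)
    (htq : t ^ (p-1) = 1 + (p:ℚ_[p]) * q) (h3 : 3 < p) (i : ℕ) {j : ℕ} (hj : j < p) :
    Cong p (fT p t (p*i + j)) (gT p t q i j) := by
  rcases lt_or_ge (2*j) p with h | h
  · exact term_cong1 ht hq htq h3 i h
  · exact cong_of_norms (nrm_fT_small ht hj h) (nrm_gT_small ht hq hj h h3)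

-- main induction
lemma main_ind {t q : ℚ_[p]} (ht : ‖t‖ ≤ 1) (hq : ‖q‖ ≤ 1)
    (htq : t ^ (p-1) = 1 + (p:ℚ_[p]) * q) (h3 : 3 < p) {k : ℕ}
    (hk1 : (p-1)/2 ≤ k) (hk2 : k < p) :
    ∀ n : ℕ, Cong p (∑ m ∈ range (p*n + (k+1)), fT p t m)
      (∑ i ∈ range (n+1), ∑ j ∈ range (k+1), gT p t q i j) := by
  have hodd : p % 2 = 1 := Nat.odd_iff.mp (hp.out.odd_of_ne_two (by omega))
  intro n
  induction n with
  | zero =>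
    apply cong_of_eq
    rw [show p*0 + (k+1) = k+1 by ring, Finset.sum_range_one]
    refine Finset.sum_congr rfl fun j _ => ?_
    unfold fT gT
    norm_num
  | succ n ih =>
    have e1 : p*(n+1) + (k+1) = (p*n + (k+1)) + p := by ring
    rw [e1, Finset.sum_range_add]
    set B := p*n + (k+1) with hB
    have esplit := Finset.sum_range_add (fun x => fT p t (B + x)) (p-1-k) (k+1)
    rw [show (p-1-k) + (k+1) = p by omega] at esplit
    rw [esplit]
    -- chunk 1 is small
    have hchunk1 : Cong p (∑ x ∈ range (p-1-k), fT p t (B + x)) 0 := by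
      unfold Cong
      rw [sub_zero]
      refine norm_sum_le_of _ _ P2nonneg fun x hx => ?_
      simp only [Finset.mem_range] at hx
      have eB : B + x = p*n + (k+1+x) := by omega
      rw [eB]
      exact nrm_fT_small ht (by omega) (by omega)
    -- chunk 2 ≈ new row
    have hchunk2 : Cong p (∑ x ∈ range (k+1), fT p t (B + ((p-1-k) + x)))
        (∑ j ∈ range (k+1), gT p t q (n+1) j) := by
      refine cong_sum _ _ _ fun j hj => ?_
      simp only [Finset.mem_range] at hj
      have eB : B + ((p-1-k) + j) = p*(n+1) + j := by omega
      rw [eB]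
      exact term_cong ht hq htq h3 (n+1) (by omega)
    have hrhs : (∑ i ∈ range (n+1+1), ∑ j ∈ range (k+1), gT p t q i j)
        = (∑ i ∈ range (n+1), ∑ j ∈ range (k+1), gT p t q i j)
          + (0 + ∑ j ∈ range (k+1), gT p t q (n+1) j) := by
      rw [Finset.sum_range_succ, zero_add]
    rw [hrhs]
    exact cong_add ih (cong_add hchunk1 hchunk2)

end St7

set_option maxHeartbeats 1600000 in
theorem stmt7 (p : ℕ) [Fact p.Prime] (hp : 3 < p) (lam : ℤ_[p]) (hlam : ‖lam‖ = 1)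
    (a b : ℕ → ℚ_[p])
    (hadef : ∀ n, a n = ∑ i ∈ range (n + 1),
        (Nat.choose (2 * i) i : ℚ_[p]) ^ 3 * ((lam : ℚ_[p]) / 64) ^ i)
    (hbdef : ∀ n, b n = ∑ i ∈ range (n + 1),
        (Nat.choose (2 * i) i : ℚ_[p]) ^ 3 * ((lam : ℚ_[p]) / 64) ^ i *
          ((6 * ((harmonicSum (2 * i) : ℚ_[p]) - (harmonicSum i : ℚ_[p])))
            + (((lam : ℚ_[p]) / 64) ^ (p - 1) - 1) / p)) :
    ∀ k : ℕ, (p - 1) / 2 ≤ k → k < p → ∀ n : ℕ,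
      ‖a (k + p * n)
          - (a k * a n + (p : ℚ_[p]) * b k *
              ∑ i ∈ range (n + 1),
                (i : ℚ_[p]) * (Nat.choose (2 * i) i : ℚ_[p]) ^ 3 * ((lam : ℚ_[p]) / 64) ^ i)‖
        ≤ (p : ℝ) ^ (-2 : ℤ) := by
  intro k hk1 hk2 n
  have h3 := hp
  -- basic facts about t = lam/64
  have hnd64 : ¬ p ∣ 64 := by
    intro hdvd
    have h2 : (p:ℕ) ∣ 2^6 := by norm_num at hdvd ⊢; exact hdvd
    have := Nat.Prime.dvd_of_dvd_pow (Fact.out : p.Prime) h2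
    have := Nat.le_of_dvd (by norm_num) this
    omega
  have h64q : ‖((64:ℕ) : ℚ_[p])‖ = 1 := St7.nrm_nat_unit hnd64
  have h64q' : ‖(64 : ℚ_[p])‖ = 1 := by
    have e : ((64:ℕ) : ℚ_[p]) = (64 : ℚ_[p]) := by norm_cast
    rw [← e]; exact h64q
  have h64ne : (64 : ℚ_[p]) ≠ 0 := by
    intro h0
    rw [h0] at h64q'
    simp at h64q'
  have hpne : ((p:ℚ_[p])) ≠ 0 := Nat.cast_ne_zero.mpr (Fact.out : p.Prime).ne_zero
  set t : ℚ_[p] := ((lam : ℚ_[p]) / 64) with htdef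
  have ht : ‖t‖ ≤ 1 := by
    rw [htdef, norm_div, h64q']
    rw [PadicInt.padic_norm_e_of_padicInt, hlam]
    norm_num
  -- Fermat quotient
  have hfer : ‖t ^ (p-1) - 1‖ ≤ (p:ℝ)⁻¹ := by
    have h64z : ‖((64:ℕ) : ℤ_[p])‖ = 1 := by
      refine le_antisymm (PadicInt.norm_le_one _) ?_
      by_contra hlt
      push_neg at hlt
      have e : (((64:ℕ):ℤ) : ℤ_[p]) = ((64:ℕ) : ℤ_[p]) := by push_cast; ring
      rw [← e, PadicInt.norm_int_lt_one_iff_dvd] at hlt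
      exact hnd64 (by exact_mod_cast hlt)
    have hf1 := St7.fermat_unit lam hlam
    have hf2 := St7.fermat_unit ((64:ℕ) : ℤ_[p]) h64z
    have e64 : ((((64:ℕ) : ℤ_[p]) : ℚ_[p])) = (64 : ℚ_[p]) := by
      norm_cast
    rw [e64] at hf2
    have e : t ^ (p-1) - 1
        = (((lam : ℚ_[p]) ^ (p-1) - 1) - ((64:ℚ_[p]) ^ (p-1) - 1)) / ((64:ℚ_[p]) ^ (p-1)) := by
      rw [htdef]
      field_simp
      rw [div_pow, sub_mul, div_mul_cancel₀ _ (pow_ne_zero _ h64ne)]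
      ring
    rw [e, norm_div, norm_pow, h64q', one_pow, div_one, sub_eq_add_neg]
    exact le_trans (Padic.nonarchimedean _ _)
      (max_le hf1 (by rw [norm_neg]; exact hf2))
  set q : ℚ_[p] := (t ^ (p-1) - 1) / (p:ℚ_[p]) with hqdef
  have hq : ‖q‖ ≤ 1 := by
    rw [hqdef, norm_div, Padic.norm_p, div_le_one (by positivity : (0:ℝ) < ((p:ℝ))⁻¹)]
    exact hfer
  have htq : t ^ (p-1) = 1 + (p:ℚ_[p]) * q := by
    rw [hqdef]
    field_simp
    ring
  -- main congruence
  have key := St7.main_ind (p := p) ht hq htq h3 hk1 hk2 n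
  -- rewrite the a-sum
  have ea : a (k + p * n) = ∑ m ∈ range (p*n + (k+1)), St7.fT p t m := by
    rw [hadef, show k + p*n + 1 = p*n + (k+1) by ring]
    rfl
  -- rewrite the RHS
  have eb : a k * a n + (p : ℚ_[p]) * b k *
        (∑ i ∈ range (n + 1),
          (i : ℚ_[p]) * (Nat.choose (2 * i) i : ℚ_[p]) ^ 3 * t ^ i)
      = ∑ i ∈ range (n+1), ∑ j ∈ range (k+1), St7.gT p t q i j := by
    rw [hadef k, hadef n, hbdef k]
    have inner : ∀ i : ℕ, (∑ j ∈ range (k+1), St7.gT p t q i j)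
        = ((Nat.choose (2*i) i : ℚ_[p])^3 * t^i)
            * (∑ j ∈ range (k+1), (Nat.choose (2*j) j : ℚ_[p])^3 * t^j)
          + ((p:ℚ_[p]) * (∑ j ∈ range (k+1), (Nat.choose (2*j) j : ℚ_[p])^3 * t^j *
              ((6 * ((harmonicSum (2*j) : ℚ_[p]) - (harmonicSum j : ℚ_[p]))) + q)))
            * ((i : ℚ_[p]) * (Nat.choose (2*i) i : ℚ_[p])^3 * t^i) := by
      intro i
      rw [Finset.mul_sum, Finset.mul_sum, Finset.sum_mul, ← Finset.sum_add_distrib]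
      refine Finset.sum_congr rfl fun j _ => ?_
      unfold St7.gT
      rw [St7.Hs_cast, St7.Hs_cast]
      ring
    calc (∑ j ∈ range (k+1), (Nat.choose (2*j) j : ℚ_[p])^3 * t^j)
          * (∑ i ∈ range (n+1), (Nat.choose (2*i) i : ℚ_[p])^3 * t^i)
        + (p:ℚ_[p]) * (∑ j ∈ range (k+1), (Nat.choose (2*j) j : ℚ_[p])^3 * t^j *
            ((6 * ((harmonicSum (2*j) : ℚ_[p]) - (harmonicSum j : ℚ_[p]))) + q))
          * (∑ i ∈ range (n+1), (i : ℚ_[p]) * (Nat.choose (2*i) i : ℚ_[p])^3 * t^i)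
        = ∑ i ∈ range (n+1),
            (((Nat.choose (2*i) i : ℚ_[p])^3 * t^i)
              * (∑ j ∈ range (k+1), (Nat.choose (2*j) j : ℚ_[p])^3 * t^j)
            + ((p:ℚ_[p]) * (∑ j ∈ range (k+1), (Nat.choose (2*j) j : ℚ_[p])^3 * t^j *
                ((6 * ((harmonicSum (2*j) : ℚ_[p]) - (harmonicSum j : ℚ_[p]))) + q)))
              * ((i : ℚ_[p]) * (Nat.choose (2*i) i : ℚ_[p])^3 * t^i)) := by
          rw [Finset.sum_add_distrib, ← Finset.sum_mul, ← Finset.mul_sum]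
          ring
      _ = ∑ i ∈ range (n+1), ∑ j ∈ range (k+1), St7.gT p t q i j := by
          exact (Finset.sum_congr rfl fun i _ => (inner i)).symm
  unfold St7.Cong at key
  rw [← ea, ← eb] at key
  exact key
end

section
/- Let p be an odd prime and k an integer with 0 ≤ k ≤ (p−1)/2. Then 16^k · C((p−1)/2 + k, 2k) ≡ (−1)^k · C(2k,k) (mod p²). -/
open Nat Finset

lemma fact_two_mul (k : ℕ) :
    (2 * k)! = (∏ j ∈ range k, (2 * j + 1)) * (2 ^ k * k !) := by
  induction k with
  | zero => simp
  | succ n ih =>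
    rw [Finset.prod_range_succ]
    have h : 2 * (n + 1) = (2 * n + 1) + 1 := by ring
    rw [h, Nat.factorial_succ, Nat.factorial_succ, Nat.factorial_succ, ih]
    ring

lemma fact_mul_choose (k : ℕ) :
    (2 * k)! * Nat.choose (2 * k) k = 4 ^ k * (∏ j ∈ range k, (2 * j + 1)) ^ 2 := by
  have h := Nat.choose_mul_factorial_mul_factorial (show k ≤ 2 * k by omega)
  have h2 : 2 * k - k = k := by omega
  rw [h2] at h
  have hc : (k ! * k !) * ((2 * k)! * Nat.choose (2 * k) k)
      = (k ! * k !) * (4 ^ k * (∏ j ∈ range k, (2 * j + 1)) ^ 2) := by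
    calc (k ! * k !) * ((2 * k)! * Nat.choose (2 * k) k)
        = (2 * k)! * (Nat.choose (2 * k) k * k ! * k !) := by ring
      _ = (2 * k)! * (2 * k)! := by rw [h]
      _ = ((∏ j ∈ range k, (2 * j + 1)) * (2 ^ k * k !)) ^ 2 := by
          rw [fact_two_mul]; ring
      _ = (k ! * k !) * (4 ^ k * (∏ j ∈ range k, (2 * j + 1)) ^ 2) := by
          rw [show (4:ℕ)^k = 2^k*2^k by rw [← mul_pow]; norm_num]; ring
  exact Nat.eq_of_mul_eq_mul_left (by positivity) hc

lemma key_prod (m k : ℕ) (hk : k ≤ m) :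
    ∏ j ∈ range k, (((2 * m + 1 : ℕ) : ℤ) ^ 2 - (2 * (j : ℤ) + 1) ^ 2)
      = 4 ^ k * ((m + k).descFactorial (2 * k) : ℤ) := by
  induction k with
  | zero => simp
  | succ n ih =>
    have hn : n ≤ m := by omega
    rw [Finset.prod_range_succ, ih hn]
    have h1 : 2 * (n + 1) = (2 * n + 1) + 1 := by ring
    have h2 : m + (n + 1) = (m + n) + 1 := by ring
    rw [h1, h2, Nat.succ_descFactorial_succ, Nat.descFactorial_succ]
    have h3 : m + n - 2 * n = m - n := by omega
    rw [h3]
    push_cast [Nat.cast_sub hn]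
    ring

theorem stmt9 (p : ℕ) (hp : p.Prime) (hodd : Odd p) (k : ℕ) (hk : k ≤ (p - 1) / 2) :
    ((p : ℤ) ^ 2) ∣
      (16 ^ k * (Nat.choose ((p - 1) / 2 + k) (2 * k) : ℤ)
        - (-1) ^ k * (Nat.choose (2 * k) k : ℤ)) := by
  obtain ⟨m, hm⟩ := hodd
  have hmp : (p - 1) / 2 = m := by omega
  rw [hmp] at hk ⊢
  set D : ℤ := 16 ^ k * (Nat.choose (m + k) (2 * k) : ℤ)
        - (-1) ^ k * (Nat.choose (2 * k) k : ℤ) with hD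
  -- step 1: p^2 ∣ (2k)! * D
  have hmain : ((p : ℤ) ^ 2) ∣ ((2 * k)! : ℤ) * D := by
    have e1 : ((2 * k)! : ℤ) * D
        = 4 ^ k * (∏ j ∈ range k, (((2 * m + 1 : ℕ) : ℤ) ^ 2 - (2 * (j : ℤ) + 1) ^ 2))
          - (-1) ^ k * (4 ^ k * ((∏ j ∈ range k, (2 * (j : ℤ) + 1)) ^ 2)) := by
      rw [key_prod m k hk]
      have hd : (((m + k).descFactorial (2 * k) : ℕ) : ℤ)
          = ((2 * k)! : ℤ) * (Nat.choose (m + k) (2 * k) : ℤ) := by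
        rw [← Nat.cast_mul, Nat.descFactorial_eq_factorial_mul_choose]
      have hc : ((2 * k)! : ℤ) * (Nat.choose (2 * k) k : ℤ)
          = 4 ^ k * ((∏ j ∈ range k, (2 * (j : ℤ) + 1)) ^ 2) := by
        have := fact_mul_choose k
        have := congrArg (fun n : ℕ => (n : ℤ)) this
        push_cast at this
        convert this using 3
      have h16 : (16 : ℤ) ^ k = 4 ^ k * 4 ^ k := by rw [← mul_pow]; norm_num
      rw [hd, hD, ← hc, h16]
      ring
    have hz : ((((2 * k)! : ℤ) * D : ℤ) : ZMod (p ^ 2)) = 0 := by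
      rw [e1, show ((2 * m + 1 : ℕ) : ℤ) = (p : ℤ) from by rw [hm]]
      have hp0 : ((p : ZMod (p ^ 2)) : ZMod (p ^ 2)) ^ 2 = 0 := by
        have := ZMod.natCast_self (p ^ 2)
        push_cast at this
        exact this
      push_cast
      rw [hp0]
      have : ∏ j ∈ range k, ((0 : ZMod (p ^ 2)) - (2 * (j : ZMod (p ^ 2)) + 1) ^ 2)
          = (-1) ^ k * (∏ j ∈ range k, (2 * (j : ZMod (p ^ 2)) + 1)) ^ 2 := by
        calc ∏ j ∈ range k, ((0 : ZMod (p ^ 2)) - (2 * (j : ZMod (p ^ 2)) + 1) ^ 2)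
            = ∏ j ∈ range k, ((-1 : ZMod (p ^ 2)) * (2 * (j : ZMod (p ^ 2)) + 1) ^ 2) := by
              apply Finset.prod_congr rfl; intro j _; ring
          _ = (-1) ^ k * (∏ j ∈ range k, (2 * (j : ZMod (p ^ 2)) + 1)) ^ 2 := by
              rw [Finset.prod_mul_distrib, Finset.prod_const, Finset.prod_pow, Finset.card_range]
      rw [this]
      ring
    exact (ZMod.intCast_zmod_eq_zero_iff_dvd _ _).mp (by push_cast at hz ⊢; exact_mod_cast hz)
  -- step 2: cancel (2k)!
  have hcop : IsCoprime ((p : ℤ) ^ 2) (((2 * k)! : ℕ) : ℤ) := by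
    apply IsCoprime.pow_left
    rw [Nat.isCoprime_iff_coprime]
    exact (Nat.Prime.coprime_iff_not_dvd hp).mpr
      (fun h => by have := (Nat.Prime.dvd_factorial hp).mp h; omega)
  exact hcop.dvd_of_dvd_mul_left hmain
end

section
/- Let p be an odd prime and λ ∈ ℤ_p. Then Σ_{k=0}^{(p−1)/2} C(2k,k)³ (λ/64)^k ≡ Σ_{k=0}^{(p−1)/2} C(2k,k)² · C((p−1)/2 + k, 2k) · (−λ/4)^k (mod p² ℤ_p). (The left side is the truncated hypergeometric sum Σ_{k=0}^{(p−1)/2} ((1/2)_k/k!)³ λ^k and the right side equals P_{(p−1)/2}(√(1−λ))² by Z.-H. Sun's identity.) -/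
open Finset

section
open Nat

-- (2k)! = 2^k * k! * ∏ (2j+1)
lemma auxFact1 (k : ℕ) : (2 * k)! = 2 ^ k * k ! * ∏ j ∈ range k, (2 * j + 1) := by
  induction k with
  | zero => simp
  | succ k ih =>
    rw [Finset.prod_range_succ, show 2 * (k + 1) = (2 * k + 1) + 1 by ring]
    rw [Nat.factorial_succ, Nat.factorial_succ, ih, Nat.factorial_succ]
    ring

-- 4^k (k!)^2 C(m,k) C(m+k,k) = ∏ ((2m+1)^2 - (2j+1)^2)  in ℤ
lemma auxFact2 (m : ℕ) : ∀ k, k ≤ m →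
    (4:ℤ) ^ k * (k ! : ℤ) ^ 2 * (m.choose k : ℤ) * ((m + k).choose k : ℤ)
      = ∏ j ∈ range k, ((2 * (m:ℤ) + 1) ^ 2 - (2 * (j:ℤ) + 1) ^ 2) := by
  intro k
  induction k with
  | zero => simp
  | succ k ih =>
    intro hk
    have hk' : k ≤ m := by omega
    have h1 : (m.choose (k+1) : ℤ) * (k+1) = (m.choose k : ℤ) * ((m:ℤ) - k) := by
      have := Nat.choose_succ_right_eq m k
      have hcast : ((m.choose (k+1) * (k+1) : ℕ) : ℤ) = ((m.choose k * (m - k) : ℕ) : ℤ) := by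
        exact_mod_cast congrArg (Nat.cast : ℕ → ℤ) this
      push_cast [Nat.cast_sub hk'] at hcast
      linarith [hcast]
    have h2 : ((m + (k+1)).choose (k+1) : ℤ) * (k+1) = ((m + k).choose k : ℤ) * ((m:ℤ) + k + 1) := by
      have := Nat.add_one_mul_choose_eq (m + k) k
      have hcast : (((m+k+1) * ((m+k).choose k) : ℕ) : ℤ) = (((m + k + 1).choose (k+1) * (k+1) : ℕ) : ℤ) := by
        exact_mod_cast congrArg (Nat.cast : ℕ → ℤ) this
      push_cast at hcast
      rw [show m + (k+1) = m + k + 1 by ring]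
      linarith [hcast]
    rw [Finset.prod_range_succ, ← ih hk']
    have hfac : ((k+1)! : ℤ) = (k+1) * (k ! : ℤ) := by
      push_cast [Nat.factorial_succ]; ring
    rw [hfac]
    have h12 : ((m.choose (k+1) : ℤ) * (k+1)) * (((m + (k+1)).choose (k+1) : ℤ) * (k+1))
        = ((m.choose k : ℤ) * ((m:ℤ) - k)) * (((m + k).choose k : ℤ) * ((m:ℤ) + k + 1)) := by
      rw [h1, h2]
    linear_combination (4 * (4:ℤ)^k * (k ! : ℤ)^2) * h12

lemma auxFact3 (p k : ℕ) :
    ((p:ℤ)^2) ∣ ((∏ j ∈ range k, (2*(j:ℤ)+1)^2)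
      - (-1)^k * ∏ j ∈ range k, ((p:ℤ)^2 - (2*(j:ℤ)+1)^2)) := by
  have h : (((∏ j ∈ range k, (2*(j:ℤ)+1)^2)
      - (-1)^k * ∏ j ∈ range k, ((p:ℤ)^2 - (2*(j:ℤ)+1)^2) : ℤ) : ZMod (p^2)) = 0 := by
    push_cast
    have hp2 : ((p : ZMod (p^2)))^2 = 0 := by
      rw [← Nat.cast_pow, ZMod.natCast_self]
    rw [hp2]
    have h1 : ∏ j ∈ range k, ((0:ZMod (p^2)) - (2*(j:ZMod (p^2))+1)^2)
        = (-1)^k * ∏ j ∈ range k, (2*(j:ZMod (p^2))+1)^2 := by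
      have : ∀ j ∈ range k, ((0:ZMod (p^2)) - (2*(j:ZMod (p^2))+1)^2)
          = (-1) * (2*(j:ZMod (p^2))+1)^2 := by intro j _; ring
      rw [Finset.prod_congr rfl this, Finset.prod_mul_distrib, Finset.prod_const,
        Finset.card_range]
    rw [h1, ← mul_assoc, ← pow_add]
    have h2 : ((-1 : ZMod (p^2)))^(k+k) = 1 := by
      rw [show k + k = 2*k by ring, pow_mul]
      simp
    rw [h2, one_mul, sub_self]
  have := (ZMod.intCast_zmod_eq_zero_iff_dvd _ (p^2)).mp h
  exact_mod_cast this


lemma termBound (p : ℕ) [Fact p.Prime] (hp : Odd p) (lam : ℤ_[p]) (m k : ℕ)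
    (hm : 2 * m + 1 = p) (hk : k ≤ m) :
    ‖(Nat.choose (2 * k) k : ℚ_[p]) ^ 3 * ((lam : ℚ_[p]) / 64) ^ k
      - (Nat.choose (2 * k) k : ℚ_[p]) ^ 2 * (Nat.choose (m + k) (2 * k) : ℚ_[p]) *
        (-(lam : ℚ_[p]) / 4) ^ k‖ ≤ (p : ℝ) ^ (-2 : ℤ) := by
  have hprime := (Fact.out : p.Prime)
  have hp3 : 3 ≤ p := by
    obtain ⟨t, ht⟩ := hp
    have := hprime.two_le
    omega
  obtain ⟨t, ht_def⟩ : ∃ x : ℚ_[p], x = (2 : ℚ_[p]) ^ k := ⟨_, rfl⟩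
  obtain ⟨Pr, hPr_def⟩ : ∃ x : ℚ_[p], x = ∏ j ∈ range k, (2 * (j : ℚ_[p]) + 1) := ⟨_, rfl⟩
  obtain ⟨Q, hQ_def⟩ : ∃ x : ℚ_[p],
      x = ∏ j ∈ range k, ((p : ℚ_[p]) ^ 2 - (2 * (j : ℚ_[p]) + 1) ^ 2) := ⟨_, rfl⟩
  obtain ⟨c, hc_def⟩ : ∃ x : ℚ_[p], x = (Nat.choose (2 * k) k : ℚ_[p]) := ⟨_, rfl⟩
  obtain ⟨Cm, hCm_def⟩ : ∃ x : ℚ_[p], x = (Nat.choose m k : ℚ_[p]) := ⟨_, rfl⟩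
  obtain ⟨Cmk, hCmk_def⟩ : ∃ x : ℚ_[p], x = (Nat.choose (m + k) k : ℚ_[p]) := ⟨_, rfl⟩
  obtain ⟨C2, hC2_def⟩ : ∃ x : ℚ_[p], x = (Nat.choose (m + k) (2 * k) : ℚ_[p]) := ⟨_, rfl⟩
  obtain ⟨F, hF_def⟩ : ∃ x : ℚ_[p], x = ((k ! : ℕ) : ℚ_[p]) := ⟨_, rfl⟩
  obtain ⟨L, hL_def⟩ : ∃ x : ℚ_[p], x = (lam : ℚ_[p]) := ⟨_, rfl⟩
  rw [← hc_def, ← hC2_def, ← hL_def]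
  have hfne : F ≠ 0 := by
    rw [hF_def]; exact Nat.cast_ne_zero.mpr (Nat.factorial_ne_zero k)
  have htne : t ≠ 0 := by rw [ht_def]; exact pow_ne_zero _ two_ne_zero
  have hPrne : Pr ≠ 0 := by
    rw [hPr_def]
    apply Finset.prod_ne_zero_iff.mpr
    intro j _
    have h1 : ((2 * j + 1 : ℕ) : ℚ_[p]) ≠ 0 := Nat.cast_ne_zero.mpr (by omega)
    push_cast at h1
    exact h1
  -- c * k! = t * Pr
  have hnat : (2 * k).choose k * k ! * k ! = (2 * k)! := by
    have h := Nat.choose_mul_factorial_mul_factorial (show k ≤ 2 * k by omega)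
    rwa [show 2 * k - k = k by omega] at h
  have hc : c * F = t * Pr := by
    have hcast := congrArg (fun n : ℕ => (n : ℚ_[p])) (hnat.trans (auxFact1 k))
    push_cast at hcast
    apply mul_right_cancel₀ hfne
    rw [hc_def, hPr_def, ht_def, hF_def]
    push_cast
    linear_combination hcast
  have hq : t ^ 2 * F ^ 2 * (Cm * Cmk) = Q := by
    have hcast := congrArg (fun z : ℤ => (z : ℚ_[p])) (auxFact2 m k hk)
    push_cast at hcast
    have hmp : (2 * (m : ℚ_[p]) + 1) = (p : ℚ_[p]) := by
      have h := congrArg (fun n : ℕ => (n : ℚ_[p])) hm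
      push_cast at h
      exact h
    rw [hmp] at hcast
    have h4 : (4 : ℚ_[p]) ^ k = t ^ 2 := by
      rw [ht_def, show (4 : ℚ_[p]) = 2 ^ 2 by norm_num, pow_right_comm]
    rw [hQ_def, hCm_def, hCmk_def, hF_def, ← hcast, h4]
    push_cast
    ring
  have hmc : C2 * c = Cmk * Cm := by
    have h := Nat.choose_mul (n := m + k) (show k ≤ 2 * k by omega)
    rw [show m + k - k = m by omega, show 2 * k - k = k by omega] at h
    have hcast := congrArg (fun n : ℕ => (n : ℚ_[p])) h
    push_cast at hcast
    rw [hC2_def, hc_def, hCmk_def, hCm_def]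
    linear_combination hcast
  have hcval : c = t * Pr / F := by rw [eq_div_iff hfne]; exact hc
  have hC2val : C2 = Cmk * Cm * F / (t * Pr) := by
    rw [eq_div_iff (mul_ne_zero htne hPrne)]
    calc C2 * (t * Pr) = C2 * (c * F) := by rw [hc]
    _ = (C2 * c) * F := by ring
    _ = Cmk * Cm * F := by rw [hmc]
  obtain ⟨Dint, hDint_def⟩ : ∃ z : ℤ, z = (∏ j ∈ range k, (2 * (j : ℤ) + 1) ^ 2)
      - (-1) ^ k * ∏ j ∈ range k, ((p : ℤ) ^ 2 - (2 * (j : ℤ) + 1) ^ 2) := ⟨_, rfl⟩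
  have hD : ((Dint : ℤ) : ℚ_[p]) = Pr ^ 2 - (-1) ^ k * Q := by
    rw [hDint_def, hPr_def, hQ_def]
    push_cast
    rw [Finset.prod_pow]
  have key : c ^ 3 * (L / 64) ^ k - c ^ 2 * C2 * (-L / 4) ^ k
      = c * L ^ k * ((Dint : ℤ) : ℚ_[p]) / (t ^ 4 * F ^ 2) := by
    have h64 : (L / 64) ^ k = L ^ k / t ^ 6 := by
      rw [div_pow, ht_def, show (64 : ℚ_[p]) = 2 ^ 6 by norm_num, pow_right_comm]
    have h4 : (-L / 4) ^ k = (-1) ^ k * L ^ k / t ^ 2 := by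
      rw [neg_div, neg_pow, div_pow, ht_def, show (4 : ℚ_[p]) = 2 ^ 2 by norm_num,
        pow_right_comm]
      ring
    have hne : t ^ 4 * F ^ 2 ≠ 0 := mul_ne_zero (pow_ne_zero _ htne) (pow_ne_zero _ hfne)
    have hc2 : c ^ 2 * F ^ 2 = t ^ 2 * Pr ^ 2 := by linear_combination (c * F + t * Pr) * hc
    have e1 : c ^ 3 * (L / 64) ^ k = c * L ^ k * Pr ^ 2 / (t ^ 4 * F ^ 2) := by
      rw [h64, mul_div_assoc']
      rw [div_eq_div_iff (pow_ne_zero 6 htne) hne]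
      linear_combination (c * L ^ k * t ^ 4) * hc2
    have e2 : c ^ 2 * C2 * (-L / 4) ^ k = c * L ^ k * ((-1) ^ k * Q) / (t ^ 4 * F ^ 2) := by
      rw [h4, mul_div_assoc']
      rw [div_eq_div_iff (pow_ne_zero 2 htne) hne]
      linear_combination ((-1) ^ k * L ^ k * t ^ 4 * F ^ 2 * c) * hmc
        + (c * L ^ k * (-1) ^ k * t ^ 2) * hq
    rw [hD, e1, e2, div_sub_div_same]
    congr 1
    ring
  rw [key]
  -- now the norm estimate
  obtain ⟨E, hE⟩ : ((p : ℤ) ^ 2) ∣ Dint := by rw [hDint_def]; exact auxFact3 p k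
  have hn2 : ‖(2 : ℚ_[p])‖ = 1 := by
    have hnd : ¬ ((p : ℤ) ∣ (2 : ℤ)) := by
      intro h
      have := Int.le_of_dvd (by norm_num) h
      omega
    have h1 : ¬ ‖((2 : ℤ) : ℚ_[p])‖ < 1 := by
      rw [Padic.norm_intCast_lt_one_iff]; exact hnd
    have h2 := Padic.norm_int_le_one (p := p) 2
    have h3 : ‖((2 : ℤ) : ℚ_[p])‖ = 1 := le_antisymm h2 (not_lt.mp h1)
    push_cast at h3
    exact h3
  have hnfact : ‖F‖ = 1 := by
    have hnd : ¬ ((p : ℤ) ∣ ((k ! : ℕ) : ℤ)) := by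
      rw [Int.natCast_dvd_natCast]
      intro h
      have := (Nat.Prime.dvd_factorial hprime).mp h
      omega
    have h1 : ¬ ‖(((k ! : ℕ) : ℤ) : ℚ_[p])‖ < 1 := by
      rw [Padic.norm_intCast_lt_one_iff]; exact hnd
    have h2 := Padic.norm_int_le_one (p := p) ((k ! : ℕ) : ℤ)
    have h3 : ‖(((k ! : ℕ) : ℤ) : ℚ_[p])‖ = 1 := le_antisymm h2 (not_lt.mp h1)
    rw [hF_def]
    push_cast at h3 ⊢
    exact h3
  have hden : ‖t ^ 4 * F ^ 2‖ = 1 := by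
    rw [norm_mul, norm_pow, norm_pow, ht_def, norm_pow, hn2, hnfact]
    norm_num
  have hDnorm : ‖((Dint : ℤ) : ℚ_[p])‖ ≤ (p : ℝ) ^ (-2 : ℤ) := by
    rw [hE]
    push_cast
    rw [norm_mul, norm_pow, Padic.norm_p]
    have hEle : ‖((E : ℤ) : ℚ_[p])‖ ≤ 1 := Padic.norm_int_le_one E
    calc ((p : ℝ)⁻¹) ^ 2 * ‖((E : ℤ) : ℚ_[p])‖ ≤ ((p : ℝ)⁻¹) ^ 2 * 1 := by
          apply mul_le_mul_of_nonneg_left hEle (by positivity)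
    _ = (p : ℝ) ^ (-2 : ℤ) := by
          rw [mul_one, show (-2 : ℤ) = -(2 : ℕ) by norm_num, zpow_neg, zpow_natCast, inv_pow]
  have hcle : ‖c‖ ≤ 1 := by
    rw [hc_def]
    have h := Padic.norm_int_le_one (p := p) ((2 * k).choose k : ℤ)
    push_cast at h
    exact h
  have hlamle : ‖L ^ k‖ ≤ 1 := by
    rw [norm_pow, hL_def]
    exact pow_le_one₀ (norm_nonneg _) (by rw [PadicInt.padic_norm_e_of_padicInt]; exact lam.2)
  rw [norm_div, hden, div_one, norm_mul, norm_mul]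
  calc ‖c‖ * ‖L ^ k‖ * ‖((Dint : ℤ) : ℚ_[p])‖
      ≤ 1 * 1 * ((p : ℝ) ^ (-2 : ℤ)) := by
        apply mul_le_mul (mul_le_mul hcle hlamle (norm_nonneg _) (by norm_num)) hDnorm
          (norm_nonneg _) (by norm_num)
  _ = (p : ℝ) ^ (-2 : ℤ) := by ring

end

theorem stmt10 (p : ℕ) [Fact p.Prime] (hp : Odd p) (lam : ℤ_[p]) :
    ‖(∑ k ∈ range ((p - 1) / 2 + 1),
          (Nat.choose (2 * k) k : ℚ_[p]) ^ 3 * ((lam : ℚ_[p]) / 64) ^ k)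
        - ∑ k ∈ range ((p - 1) / 2 + 1),
            (Nat.choose (2 * k) k : ℚ_[p]) ^ 2 *
              (Nat.choose ((p - 1) / 2 + k) (2 * k) : ℚ_[p]) * (-(lam : ℚ_[p]) / 4) ^ k‖
      ≤ (p : ℝ) ^ (-2 : ℤ) := by
  have hprime := (Fact.out : p.Prime)
  have hm : 2 * ((p - 1) / 2) + 1 = p := by
    obtain ⟨s, hs⟩ := hp
    omega
  rw [← Finset.sum_sub_distrib]
  apply IsUltrametricDist.norm_sum_le_of_forall_le_of_nonneg
  · have hppos : (0 : ℝ) < (p : ℝ) := by exact_mod_cast hprime.pos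
    positivity
  · intro k hk
    exact termBound p hp lam ((p - 1) / 2) k hm (Nat.lt_succ_iff.mp (mem_range.mp hk))
end

section
/- For every natural number n, the polynomial identity Σ_{k=0}^{n} C(2k,k)² · C(n+k, 2k) · ((x²−1)/4)^k = P_n(x)² holds in ℚ[x], where P_n(x) = (1/(2^n n!)) · (d/dx)^n (x²−1)^n is the n-th Legendre polynomial. -/
open Finset Polynomial
noncomputable section

lemma lem1 (m : ℕ) (q : Polynomial ℚ) :
    derivative^[m+2] ((X^2-1)*q) = (X^2-1) * derivative^[m+2] q
      + C (2*(m+2) : ℚ) * X * derivative^[m+1] q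
      + C ((m+2)*(m+1) : ℚ) * derivative^[m] q := by
  have e : ∀ (j : ℕ) (p : Polynomial ℚ), derivative^[j+1] p = derivative (derivative^[j] p) :=
    fun j p => Function.iterate_succ_apply' _ _ _
  induction m with
  | zero =>
    simp only [show (0:ℕ)+2 = 1+1 from rfl, show (0:ℕ)+1 = 0+1 from rfl, e,
      Function.iterate_zero_apply]
    simp only [derivative_mul, derivative_add, derivative_sub, derivative_pow, derivative_X,
      derivative_one, derivative_C, derivative_zero, derivative_natCast, derivative_ofNat,
      C_add, C_mul, map_ofNat, map_natCast, C_1]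
    push_cast
    ring
  | succ m ih =>
    have h3 : m+1+2 = (m+2)+1 := by omega
    rw [h3, e, ih]
    simp only [show m+1+1 = (m+1)+1 from rfl, e]
    simp only [derivative_add, derivative_mul, derivative_sub, derivative_pow, derivative_X,
      derivative_one, derivative_C, derivative_zero, derivative_natCast, derivative_ofNat,
      C_add, C_mul, map_ofNat, map_natCast, C_1]
    push_cast
    ring

lemma lem2 (m : ℕ) (q : Polynomial ℚ) :
    derivative^[m+1] (X*q) = X * derivative^[m+1] q + C ((m+1) : ℚ) * derivative^[m] q := by
  have e : ∀ (j : ℕ) (p : Polynomial ℚ), derivative^[j+1] p = derivative (derivative^[j] p) :=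
    fun j p => Function.iterate_succ_apply' _ _ _
  induction m with
  | zero =>
    simp [derivative_mul]
    ring
  | succ m ih =>
    rw [show m+1+1 = (m+1)+1 from rfl, e, ih]
    simp only [e]
    simp only [derivative_add, derivative_mul, derivative_X, derivative_C, C_add, C_mul,
      map_ofNat, map_natCast, C_1, derivative_natCast, derivative_ofNat, derivative_one]
    push_cast
    ring

/-- The `n`-th Legendre polynomial over `ℚ`, via the Rodrigues formula
`P_n(x) = (1/(2^n n!)) (d/dx)^n (x²−1)^n`. -/
noncomputable def legendreP (n : ℕ) : Polynomial ℚ :=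
  Polynomial.C (1 / (2 ^ n * n.factorial : ℚ)) *
    (Polynomial.derivative^[n] ((Polynomial.X ^ 2 - 1) ^ n))

lemma ode (n : ℕ) : (X^2-1) * derivative (derivative (legendreP n)) + 2*X*derivative (legendreP n)
    = C ((n:ℚ)*(n+1)) * legendreP n := by
  have e : ∀ (j : ℕ) (p : Polynomial ℚ), derivative^[j+1] p = derivative (derivative^[j] p) :=
    fun j p => Function.iterate_succ_apply' _ _ _
  suffices h : (X^2-1) * derivative (derivative (derivative^[n] ((X^2-1)^n)))
      + 2*X*derivative (derivative^[n] ((X^2-1)^n))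
      = C ((n:ℚ)*(n+1)) * derivative^[n] ((X^2-1)^n) by
    unfold legendreP
    simp only [derivative_C_mul]
    linear_combination (C (1 / (2 ^ n * n.factorial : ℚ))) * h
  cases n with
  | zero => simp
  | succ m =>
    set u : Polynomial ℚ := (X^2-1)^(m+1) with hu
    have base : (X^2-1) * derivative u = C (2*(m+1) : ℚ) * (X * u) := by
      rw [hu, derivative_pow]
      push_cast
      simp only [derivative_sub, derivative_pow, derivative_X, derivative_one, C_add, C_mul,
        map_ofNat, map_natCast, C_1]
      ring_nf
    have happ := congrArg (derivative^[m+2]) base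
    rw [lem1 m (derivative u), iterate_derivative_C_mul, lem2 (m+1) u] at happ
    have k3 : derivative^[m] (derivative u) = derivative^[m+1] u :=
      (Function.iterate_succ_apply derivative m u).symm
    have k2 : derivative^[m+1] (derivative u) = derivative (derivative^[m+1] u) := by
      rw [e m (derivative u), k3]
    have k1 : derivative^[m+2] (derivative u) = derivative (derivative (derivative^[m+1] u)) := by
      rw [e (m+1) (derivative u), k2]
    rw [k1, k2, k3, e (m+1) u] at happ
    simp only [C_add, C_mul, map_ofNat, map_natCast, C_1] at happ ⊢
    push_cast at happ ⊢
    linear_combination happ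

lemma eval1 (n : ℕ) : (legendreP n).eval 1 = 1 := by
  have key : (derivative^[n] ((X^2-1)^n) : Polynomial ℚ).eval 1 = 2^n * n.factorial := by
    have hsplit : ((X^2-1)^n : Polynomial ℚ) = (X - C 1)^n * (X + 1)^n := by
      rw [← mul_pow]; congr 1; rw [C_1]; ring
    rw [hsplit, iterate_derivative_mul]
    rw [eval_finset_sum]
    rw [Finset.sum_eq_single 0]
    · simp only [Nat.choose_zero_right, one_smul, Nat.sub_zero, Function.iterate_zero_apply,
        iterate_derivative_X_sub_pow_self, eval_mul, eval_natCast, eval_pow, eval_add, eval_X,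
        eval_one]
      norm_num
      ring
    · intro k hk hk0
      have hkn : k ≤ n := by simpa using Nat.lt_succ_iff.mp (Finset.mem_range.mp hk)
      rw [iterate_derivative_X_sub_pow]
      simp only [eval_smul, smul_eq_mul, eval_mul, eval_smul, eval_pow, eval_sub, eval_X, eval_one,
        eval_C]
      rw [show n - (n - k) = k from by omega]
      simp [sub_self, zero_pow hk0]
    · intro h
      simp at h
  unfold legendreP
  rw [eval_mul, eval_C, key]
  have h1 : (2:ℚ)^n ≠ 0 := by positivity
  have h2 : (n.factorial : ℚ) ≠ 0 := by exact_mod_cast Nat.factorial_ne_zero n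
  field_simp

noncomputable def Mop (N : ℚ) (z : Polynomial ℚ) : Polynomial ℚ :=
  (X^2-1)^2 * derivative (derivative (derivative z))
    + 6*X*(X^2-1) * derivative (derivative z)
    + ((6-4*C N)*(X^2-1)+4) * derivative z - 4*C N*X*z

lemma Mop_sub (N : ℚ) (p q : Polynomial ℚ) : Mop N (p - q) = Mop N p - Mop N q := by
  unfold Mop
  simp only [derivative_sub]
  ring

lemma Mop_sq (n : ℕ) : Mop ((n:ℚ)*(n+1)) ((legendreP n)^2) = 0 := by
  set N : ℚ := (n:ℚ)*(n+1)
  set P := legendreP n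
  have h1 : (X^2-1) * derivative (derivative P) + 2*X*derivative P = C N * P := ode n
  have h2 := congrArg derivative h1
  simp only [derivative_add, derivative_mul, derivative_sub, derivative_pow, derivative_X,
    derivative_one, derivative_C, map_ofNat, derivative_ofNat, derivative_zero,
    map_natCast] at h2
  norm_num at h2
  unfold Mop
  simp only [derivative_pow, derivative_mul, derivative_add, derivative_sub, derivative_X,
    derivative_one, derivative_C, map_ofNat, derivative_ofNat, derivative_zero, map_natCast]
  norm_num
  linear_combination (6*(X^2-1)*derivative P + 4*X*P) * h1 + (2*P*(X^2-1)) * h2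

noncomputable def Eop (N : ℚ) (q : Polynomial ℚ) : Polynomial ℚ :=
  (8*X^3+8*X^2) * derivative (derivative (derivative q))
    + (36*X^2+24*X) * derivative (derivative q)
    + ((24-8*C N)*X+8) * derivative q - 4*C N * q

lemma chain (N : ℚ) (q : Polynomial ℚ) :
    Mop N (q.comp (X^2-1)) = X * ((Eop N q).comp (X^2-1)) := by
  have hc : ∀ p : Polynomial ℚ,
      derivative (p.comp (X^2-1)) = 2 * X * ((derivative p).comp (X^2-1)) := by
    intro p
    rw [derivative_comp]
    simp only [derivative_sub, derivative_pow, derivative_X, derivative_one, mul_one, sub_zero,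
      map_ofNat, map_natCast, Nat.cast_ofNat]
    ring
  unfold Mop Eop
  simp only [hc, derivative_mul, derivative_add, derivative_C_mul, derivative_X, derivative_C,
    derivative_ofNat, derivative_zero, zero_mul, mul_one]
  simp only [add_comp, mul_comp, sub_comp, pow_comp, X_comp, C_comp, ofNat_comp, natCast_comp]
  push_cast
  ring

def co (n k : ℕ) : ℚ := ((2*k).choose k : ℚ)^2 * ((n+k).choose (2*k) : ℚ)

lemma keyc (n k : ℕ) (hk : k < n) :
    ((k:ℚ)+1)^3 * co n (k+1)
    = 2*(2*(k:ℚ)+1)*((n:ℚ)-(k:ℚ))*((n:ℚ)+(k:ℚ)+1) * co n k := by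
  unfold co
  rw [show 2*(k+1) = 2*k+2 from by ring, show n+(k+1) = n+k+1 from by ring]
  have c1 : ((2*k+2).choose (k+1) : ℚ)
      = ((2*k+2).factorial : ℚ) / ((k+1).factorial * (k+1).factorial) := by
    rw [Nat.cast_choose ℚ (by omega), show 2*k+2 - (k+1) = k+1 from by omega]
  have c2 : ((n+k+1).choose (2*k+2) : ℚ)
      = ((n+k+1).factorial : ℚ) / ((2*k+2).factorial * (n-k-1).factorial) := by
    rw [Nat.cast_choose ℚ (by omega), show n+k+1 - (2*k+2) = n-k-1 from by omega]
  have c3 : ((2*k).choose k : ℚ) = ((2*k).factorial : ℚ) / (k.factorial * k.factorial) := by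
    rw [Nat.cast_choose ℚ (by omega), show 2*k - k = k from by omega]
  have c4 : ((n+k).choose (2*k) : ℚ)
      = ((n+k).factorial : ℚ) / ((2*k).factorial * (n-k).factorial) := by
    rw [Nat.cast_choose ℚ (by omega), show n+k - 2*k = n-k from by omega]
  have f1 : ((2*k+2).factorial : ℚ) = (2*(k:ℚ)+2)*(2*(k:ℚ)+1)*(2*k).factorial := by
    rw [show 2*k+2 = (2*k+1)+1 from rfl, Nat.factorial_succ, Nat.factorial_succ]
    push_cast; ring
  have f2 : ((k+1).factorial : ℚ) = ((k:ℚ)+1)*k.factorial := by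
    rw [Nat.factorial_succ]; push_cast; ring
  have f3 : ((n+k+1).factorial : ℚ) = ((n:ℚ)+(k:ℚ)+1)*(n+k).factorial := by
    rw [Nat.factorial_succ]; push_cast; ring
  have hnk1 : ((n-k-1:ℕ) : ℚ) = (n:ℚ)-(k:ℚ)-1 := by
    rw [show n-k-1 = n-(k+1) from by omega, Nat.cast_sub hk]; push_cast; ring
  have f4 : ((n-k).factorial : ℚ) = ((n:ℚ)-(k:ℚ))*(n-k-1).factorial := by
    rw [show n-k = (n-k-1)+1 from by omega, Nat.factorial_succ]
    push_cast [hnk1]; ring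
  rw [c1, c2, c3, c4, f1, f2, f3, f4]
  have z1 : ((2*k).factorial : ℚ) ≠ 0 := by exact_mod_cast (2*k).factorial_ne_zero
  have z2 : (k.factorial : ℚ) ≠ 0 := by exact_mod_cast k.factorial_ne_zero
  have z3 : ((n-k-1).factorial : ℚ) ≠ 0 := by exact_mod_cast (n-k-1).factorial_ne_zero
  have z4 : ((n+k).factorial : ℚ) ≠ 0 := by exact_mod_cast (n+k).factorial_ne_zero
  have z5 : ((k:ℚ)+1) ≠ 0 := by positivity
  have z6 : ((n:ℚ)-(k:ℚ)) ≠ 0 := by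
    have : (k:ℚ) < (n:ℚ) := by exact_mod_cast hk
    intro h; linarith
  have z7 : (2*(k:ℚ)+1) ≠ 0 := by positivity
  have z8 : (2*(k:ℚ)+2) ≠ 0 := by positivity
  field_simp

lemma Eterm (N a : ℚ) (k : ℕ) : Eop N (C a * X^k)
    = C (a * (4*(2*(k:ℚ)+1)*((k:ℚ)*((k:ℚ)+1)-N))) * X^k
      + C (a * (8*(k:ℚ)^3)) * X^(k-1) := by
  match k with
  | 0 =>
    unfold Eop
    simp only [pow_zero, mul_one, derivative_C, derivative_zero, mul_zero, zero_mul, add_zero,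
      zero_add, Nat.cast_zero, Nat.zero_sub, pow_zero]
    norm_num
    simp only [map_ofNat]
    ring
  | 1 =>
    unfold Eop
    simp only [pow_one, derivative_C_mul, derivative_X, derivative_one, derivative_zero, mul_one,
      mul_zero, zero_mul, add_zero, zero_add, derivative_C]
    simp only [C_mul, C_add, C_sub, C_pow, map_ofNat, map_natCast, C_1, C_0, map_zero]
    push_cast
    ring
  | 2 =>
    unfold Eop
    simp only [derivative_C_mul, derivative_X_pow, derivative_X, derivative_one, derivative_C,
      derivative_zero, mul_one, mul_zero, zero_mul, add_zero, zero_add, Nat.cast_ofNat,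
      derivative_ofNat, derivative_natCast]
    norm_num
    simp only [C_mul, C_add, C_sub, C_pow, map_ofNat, map_natCast, C_1, C_0, map_zero]
    push_cast
    ring
  | (j+3) =>
    unfold Eop
    have d1 : derivative ((X:Polynomial ℚ)^(j+3)) = C ((j:ℚ)+3) * X^(j+2) := by
      rw [derivative_X_pow]; push_cast; norm_num
    have d2 : derivative ((X:Polynomial ℚ)^(j+2)) = C ((j:ℚ)+2) * X^(j+1) := by
      rw [derivative_X_pow]; push_cast; norm_num
    have d3 : derivative ((X:Polynomial ℚ)^(j+1)) = C ((j:ℚ)+1) * X^j := by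
      rw [derivative_X_pow]; push_cast; norm_num
    simp only [derivative_C_mul, d1, d2, d3]
    rw [show j+3-1 = j+2 from rfl]
    simp only [C_mul, C_add, C_sub, C_pow, map_ofNat, map_natCast, C_1, C_0, map_zero]
    push_cast
    ring

lemma sumE (n : ℕ) :
    Eop ((n:ℚ)*((n:ℚ)+1)) (∑ k ∈ range (n+1), C (co n k * (1/4:ℚ)^k) * X^k) = 0 := by
  set N : ℚ := (n:ℚ)*((n:ℚ)+1) with hN
  have Esum : Eop N (∑ k ∈ range (n+1), C (co n k * (1/4:ℚ)^k) * X^k)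
      = ∑ k ∈ range (n+1), Eop N (C (co n k * (1/4:ℚ)^k) * X^k) := by
    unfold Eop
    simp only [derivative_sum, Finset.mul_sum, Finset.sum_sub_distrib, Finset.sum_add_distrib]
  rw [Esum]
  have Et : ∀ k ∈ range (n+1), Eop N (C (co n k * (1/4:ℚ)^k) * X^k)
      = C (co n k * (1/4:ℚ)^k * (4*(2*(k:ℚ)+1)*((k:ℚ)*((k:ℚ)+1)-N))) * X^k
        + C (co n k * (1/4:ℚ)^k * (8*(k:ℚ)^3)) * X^(k-1) := fun k _ => Eterm N _ k
  rw [Finset.sum_congr rfl Et, Finset.sum_add_distrib]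
  rw [Finset.sum_range_succ (fun k => C (co n k * (1/4:ℚ)^k * (4*(2*(k:ℚ)+1)*((k:ℚ)*((k:ℚ)+1)-N))) * X^k)]
  rw [Finset.sum_range_succ' (fun k => C (co n k * (1/4:ℚ)^k * (8*(k:ℚ)^3)) * X^(k-1))]
  have t1n : C (co n n * (1/4:ℚ)^n * (4*(2*(n:ℚ)+1)*((n:ℚ)*((n:ℚ)+1)-N))) * X^n = 0 := by
    rw [hN, show co n n * (1/4:ℚ)^n * (4*(2*(n:ℚ)+1)*((n:ℚ)*((n:ℚ)+1)-((n:ℚ)*((n:ℚ)+1)))) = 0 from by ring, C_0, zero_mul]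
  have t20 : C (co n 0 * (1/4:ℚ)^0 * (8*((0:ℕ):ℚ)^3)) * X^(0-1) = 0 := by
    norm_num
  rw [t1n, t20, add_zero, add_zero, ← Finset.sum_add_distrib]
  apply Finset.sum_eq_zero
  intro k hk
  have hkn : k < n := Finset.mem_range.mp hk
  have key := keyc n k hkn
  rw [show k+1-1 = k from rfl, ← add_mul, ← C_add]
  have hz : co n k * (1/4:ℚ)^k * (4*(2*(k:ℚ)+1)*((k:ℚ)*((k:ℚ)+1)-N))
      + co n (k+1) * (1/4:ℚ)^(k+1) * (8*((k+1:ℕ):ℚ)^3) = 0 := by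
    rw [hN]
    push_cast
    linear_combination (2*(1/4:ℚ)^k) * key
  rw [hz, C_0, zero_mul]

lemma sDl (k : ℕ) (h : Polynomial ℚ) :
    (X - 1) * derivative ((X-1)^k * h)
      = (X-1)^k * (C (k:ℚ) * h + (X-1) * derivative h) := by
  match k with
  | 0 => simp
  | (j+1) =>
    rw [derivative_mul, derivative_pow]
    simp only [derivative_sub, derivative_X, derivative_one, sub_zero, mul_one,
      show j+1-1 = j from rfl]
    push_cast
    ring

lemma uniq (N : ℚ) (z : Polynomial ℚ) (hM : Mop N z = 0) (h1 : z.eval 1 = 0) : z = 0 := by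
  have claim : ∀ k : ℕ, ((X:Polynomial ℚ) - 1)^(k+1) ∣ z := by
    intro k
    induction k with
    | zero =>
      rw [pow_one, show (X - 1 : Polynomial ℚ) = X - C 1 from by rw [C_1]]
      exact dvd_iff_isRoot.mpr h1
    | succ k ih =>
      obtain ⟨g, hg⟩ := ih
      set h₁ : Polynomial ℚ := C ((k:ℚ)+1) * g + (X-1) * derivative g with hh1
      set h₂ : Polynomial ℚ := C (k:ℚ) * h₁ + (X-1) * derivative h₁ with hh2
      set h₃ : Polynomial ℚ := C ((k:ℚ)-1) * h₂ + (X-1) * derivative h₂ with hh3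
      have e1 : derivative z = (X-1)^k * h₁ := by
        rw [hg, derivative_mul, derivative_pow]
        simp only [derivative_sub, derivative_X, derivative_one, sub_zero, mul_one,
          show k+1-1 = k from rfl]
        rw [hh1]
        push_cast
        ring
      have e2 : (X-1) * derivative (derivative z) = (X-1)^k * h₂ := by
        rw [e1, sDl k h₁]
      have e3 : (X-1)^2 * derivative (derivative (derivative z)) = (X-1)^k * h₃ := by
        have hd2 := congrArg derivative e2
        rw [derivative_mul] at hd2
        simp only [derivative_sub, derivative_X, derivative_one, sub_zero, one_mul] at hd2
        have hh3' : h₃ = (C (k:ℚ) - 1) * h₂ + (X-1) * derivative h₂ := by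
          rw [hh3, C_sub, C_1]
        linear_combination (X-1) * hd2 + sDl k h₂ - e2 - (X-1)^k * hh3'
      have hM' := hM
      unfold Mop at hM'
      have hG : (X-1)^k * ((X+1)^2 * h₃ + 6*X*(X+1) * h₂
          + ((6-4*C N)*(X^2-1)+4) * h₁ - 4*C N*X*(X-1) * g) = 0 := by
        linear_combination hM' - (X+1)^2 * e3 - 6*X*(X+1)*e2
          - ((6-4*C N)*(X^2-1)+4)*e1 + 4*C N*X*hg
      have hpow : ((X:Polynomial ℚ)-1)^k ≠ 0 := by
        apply pow_ne_zero
        intro hc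
        have := congrArg (fun p => Polynomial.eval 0 p) hc
        simp at this
      have hG0 : (X+1)^2 * h₃ + 6*X*(X+1) * h₂
          + ((6-4*C N)*(X^2-1)+4) * h₁ - 4*C N*X*(X-1) * g = 0 :=
        (mul_eq_zero.mp hG).resolve_left hpow
      have hge : g.eval 1 = 0 := by
        have hev := congrArg (fun p => Polynomial.eval 1 p) hG0
        simp only [eval_add, eval_sub, eval_mul, eval_pow, eval_X, eval_one, eval_C,
          eval_ofNat, hh1, hh2, hh3] at hev
        norm_num at hev
        have hfac : (4:ℚ)*((k:ℚ)+1)^3 * g.eval 1 = 0 := by linear_combination hev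
        have : ((k:ℚ)+1) ≠ 0 := by positivity
        have h4 : (4:ℚ)*((k:ℚ)+1)^3 ≠ 0 := by positivity
        exact (mul_eq_zero.mp hfac).resolve_left h4
      obtain ⟨g₂, hg₂⟩ := dvd_iff_isRoot.mpr hge
      refine ⟨g₂, ?_⟩
      rw [hg, hg₂]
      rw [show (X - C 1 : Polynomial ℚ) = X - 1 from by rw [C_1]]
      ring
  by_contra hz
  have hd := Polynomial.natDegree_le_of_dvd (claim z.natDegree) hz
  rw [Polynomial.natDegree_pow] at hd
  have hxd : ((X:Polynomial ℚ) - 1).natDegree = 1 := by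
    rw [show (X - 1 : Polynomial ℚ) = X - C 1 from by rw [C_1]]
    exact natDegree_X_sub_C 1
  rw [hxd] at hd
  omega

theorem stmt16 (n : ℕ) :
    ∑ k ∈ range (n + 1),
        Polynomial.C ((Nat.choose (2 * k) k : ℚ) ^ 2 * (Nat.choose (n + k) (2 * k) : ℚ)) *
          (Polynomial.C ((1 : ℚ) / 4) * (Polynomial.X ^ 2 - 1)) ^ k
      = (legendreP n) ^ 2 := by
  set N : ℚ := (n:ℚ)*((n:ℚ)+1) with hN
  set S := ∑ k ∈ range (n + 1),
      Polynomial.C ((Nat.choose (2 * k) k : ℚ) ^ 2 * (Nat.choose (n + k) (2 * k) : ℚ)) *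
        (Polynomial.C ((1 : ℚ) / 4) * (Polynomial.X ^ 2 - 1)) ^ k with hS
  have hcomp : S = (∑ k ∈ range (n+1), C (co n k * (1/4:ℚ)^k) * X^k).comp (X^2-1) := by
    rw [hS, Polynomial.sum_comp]
    apply Finset.sum_congr rfl
    intro k _
    rw [mul_comp, C_comp, pow_comp, X_comp]
    rw [mul_pow, ← C_pow]
    unfold co
    simp only [C_mul]
    ring
  have hMS : Mop N S = 0 := by
    rw [hcomp, chain, hN, sumE n, zero_comp, mul_zero]
  have hMP : Mop N ((legendreP n)^2) = 0 := by rw [hN]; exact Mop_sq n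
  have hevS : S.eval 1 = 1 := by
    rw [hS, eval_finset_sum]
    rw [Finset.sum_eq_single 0]
    · simp
    · intro k _ hk0
      simp only [eval_mul, eval_pow, eval_C, eval_sub, eval_X, eval_one]
      norm_num [zero_pow hk0]
    · intro h; simp at h
  have hz : S - (legendreP n)^2 = 0 := by
    apply uniq N
    · rw [Mop_sub, hMS, hMP, sub_zero]
    · rw [eval_sub, hevS, eval_pow, eval1, one_pow, sub_self]
  exact sub_eq_zero.mp hz
end
end
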